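/- arXiv:1708.01597 — 2 statements merged into one kernel-verified Lean document; each statement's English description precedes it below -/
import Mathlib

section
/- Integral estimate: Fix ϑ > 0 small and −1 < t < 1. Then there is a constant C > 1 (depending only on t and ϑ) such that for all ω = λ + iν with ν ≥ 0 and |ω| ≤ ϑ: (a) if λ > ν > 0 then C^{-1} λ^t/ν ≤ ∫_0^ϑ x^t/((x−λ)² + ν²) dx ≤ C λ^t/ν; (b) if λ < 0 and |λ| > ν then C^{-1} |ω|^{t−1} ≤ ∫_0^ϑ x^t/((x−λ)² + ν²) dx ≤ C |ω|^{t−1}, and |ω|^{t−1} is itself comparable to |λ|^{t−1}; (c) if ν > |λ| then C^{-1} ν^{t−1} ≤ ∫_0^ϑ x^t/((x−λ)² + ν²) dx ≤ C ν^{t−1}. -/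
open MeasureTheory Set

noncomputable section

namespace RMT

variable {t : ℝ}

/-- integrability of x^t on (0,c) -/
lemma integrableOn_rpow_Ioo (ht : -1 < t) (c : ℝ) :
    IntegrableOn (fun x : ℝ => x ^ t) (Ioo 0 c) := by
  rcases le_or_gt c 0 with h | h
  · rw [Ioo_eq_empty (by intro hh; linarith)]
    exact integrableOn_empty
  · exact ((intervalIntegrable_iff_integrableOn_Ioc_of_le h.le).1
      (intervalIntegral.intervalIntegrable_rpow' ht)).mono_set Ioo_subset_Ioc_self

lemma setInt_rpow (ht : -1 < t) {c : ℝ} (hc : 0 ≤ c) :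
    ∫ x in Ioo (0:ℝ) c, x ^ t = c ^ (t+1) / (t+1) := by
  rw [← integral_Ioc_eq_integral_Ioo, ← intervalIntegral.integral_of_le hc]
  rw [integral_rpow (Or.inl ht)]
  rw [Real.zero_rpow (by linarith)]
  ring

/-- integrability of the main integrand when the denominator is bounded below -/
lemma integrableOn_f (ht : -1 < t) {ϑ lam nu ε : ℝ} {s : Set ℝ} (hε : 0 < ε)
    (hs : MeasurableSet s) (hsub : s ⊆ Ioo 0 ϑ)
    (h : ∀ x ∈ s, ε ≤ (x - lam) ^ 2 + nu ^ 2) :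
    IntegrableOn (fun x => x ^ t / ((x - lam) ^ 2 + nu ^ 2)) s := by
  have hg : IntegrableOn (fun x : ℝ => ε⁻¹ * x ^ t) s := by
    exact (((integrableOn_rpow_Ioo ht ϑ).mono_set hsub)).const_mul _
  apply Integrable.mono hg
  · apply Measurable.aestronglyMeasurable
    apply Measurable.div
    · fun_prop
    · fun_prop
  · rw [ae_restrict_iff' hs]
    filter_upwards with x hx
    have hx0 : 0 < x := (hsub hx).1
    have hD : ε ≤ (x - lam) ^ 2 + nu ^ 2 := h x hx
    have hxt : 0 ≤ x ^ t := Real.rpow_nonneg hx0.le t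
    rw [Real.norm_eq_abs, Real.norm_eq_abs, abs_of_nonneg (by positivity),
      abs_of_nonneg (by positivity)]
    rw [div_le_iff₀ (by linarith), inv_mul_eq_div, div_mul_eq_mul_div, le_div_iff₀ hε]
    nlinarith

/-- Cauchy-kernel interval integral -/
lemma int_inv_quad (lam : ℝ) {nu : ℝ} (hnu : 0 < nu) (a b : ℝ) :
    ∫ x in a..b, ((x - lam) ^ 2 + nu ^ 2)⁻¹
      = (Real.arctan ((b - lam)/nu) - Real.arctan ((a - lam)/nu)) / nu := by
  have h1 : ∀ x : ℝ, ((x - lam) ^ 2 + nu ^ 2)⁻¹ = (nu ^ 2)⁻¹ * (1 + ((x - lam)/nu) ^ 2)⁻¹ := by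
    intro x
    rw [← mul_inv]
    congr 1
    field_simp
    ring
  simp_rw [h1]
  rw [intervalIntegral.integral_const_mul]
  have h2 : (∫ x in a..b, (1 + ((x - lam)/nu) ^ 2)⁻¹)
      = ∫ x in (a - lam)..(b - lam), (1 + (x/nu) ^ 2)⁻¹ :=
    intervalIntegral.integral_comp_sub_right (fun x => (1 + (x/nu) ^ 2)⁻¹) lam
  have h3 : (∫ x in (a - lam)..(b - lam), (1 + (x/nu) ^ 2)⁻¹)
      = nu • ∫ x in ((a - lam)/nu)..((b - lam)/nu), (1 + x ^ 2)⁻¹ :=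
    intervalIntegral.integral_comp_div (fun x => (1 + x ^ 2)⁻¹) (ne_of_gt hnu)
  rw [h2, h3, integral_inv_one_add_sq, smul_eq_mul]
  field_simp

lemma integrableOn_inv_quad (lam : ℝ) {nu : ℝ} (hnu : 0 < nu) {s : Set ℝ} {a b : ℝ}
    (hsub : s ⊆ Ioc a b) (hms : MeasurableSet s) :
    IntegrableOn (fun x : ℝ => ((x - lam) ^ 2 + nu ^ 2)⁻¹) s := by
  have hc : Continuous fun x : ℝ => ((x - lam) ^ 2 + nu ^ 2)⁻¹ := by
    apply Continuous.inv₀ (by continuity)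
    intro x; positivity
  exact (hc.integrableOn_Ioc).mono_set hsub

lemma int_inv_quad_le (lam : ℝ) {nu : ℝ} (hnu : 0 < nu) (a b : ℝ) :
    ∫ x in Ioo a b, ((x - lam) ^ 2 + nu ^ 2)⁻¹ ≤ Real.pi / nu := by
  have hpi : 0 < Real.pi := Real.pi_pos
  rcases le_or_gt b a with h | h
  · rw [Ioo_eq_empty (by intro hh; linarith)]
    simp
    positivity
  · rw [← integral_Ioc_eq_integral_Ioo, ← intervalIntegral.integral_of_le h.le,
      int_inv_quad lam hnu a b]
    have h1 := Real.arctan_lt_pi_div_two ((b - lam)/nu)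
    have h2 := Real.neg_pi_div_two_lt_arctan ((a - lam)/nu)
    rw [div_le_div_iff_of_pos_right hnu]
    linarith



lemma rpow_lower (ht₂ : t ≤ 1) {a x : ℝ} (ha : 0 < a) (hx1 : a/2 ≤ x) (hx2 : x ≤ a) :
    a ^ t / 2 ≤ x ^ t := by
  have hx0 : 0 < x := lt_of_lt_of_le (by linarith) hx1
  rcases le_or_gt 0 t with h | h
  · have h1 : (a/2) ^ t ≤ x ^ t := Real.rpow_le_rpow (by positivity) hx1 h
    have h2 : (a/2 : ℝ) ^ t = a ^ t / 2 ^ t := Real.div_rpow ha.le (by norm_num) t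
    have h3 : (2:ℝ) ^ t ≤ 2 := by
      calc (2:ℝ) ^ t ≤ 2 ^ (1:ℝ) := Real.rpow_le_rpow_of_exponent_le one_le_two ht₂
      _ = 2 := Real.rpow_one 2
    have h4 : a ^ t / 2 ≤ a ^ t / 2 ^ t := by
      apply div_le_div_of_nonneg_left (Real.rpow_nonneg ha.le t) (by positivity) h3
    linarith [h2 ▸ h1]
  · have h1 : a ^ t ≤ x ^ t := Real.rpow_le_rpow_of_nonpos hx0 hx2 h.le
    have : 0 < a ^ t := Real.rpow_pos_of_pos ha t
    linarith

lemma rpow_upper (ht₁ : -1 < t) (ht₂ : t ≤ 1) {a x : ℝ} (ha : 0 < a) (hx1 : a/2 ≤ x)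
    (hx2 : x ≤ 2*a) : x ^ t ≤ 2 * a ^ t := by
  have hx0 : 0 < x := lt_of_lt_of_le (by linarith) hx1
  have hat : 0 < a ^ t := Real.rpow_pos_of_pos ha t
  rcases le_or_gt 0 t with h | h
  · have h1 : x ^ t ≤ (2*a) ^ t := Real.rpow_le_rpow hx0.le hx2 h
    have h2 : ((2:ℝ)*a) ^ t = 2 ^ t * a ^ t := Real.mul_rpow (by norm_num) ha.le
    have h3 : (2:ℝ) ^ t ≤ 2 := by
      calc (2:ℝ) ^ t ≤ 2 ^ (1:ℝ) := Real.rpow_le_rpow_of_exponent_le one_le_two ht₂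
      _ = 2 := Real.rpow_one 2
    nlinarith
  · have h1 : x ^ t ≤ (a/2) ^ t := Real.rpow_le_rpow_of_nonpos (by positivity) hx1 h.le
    have h2 : (a/2 : ℝ) ^ t = a ^ t / 2 ^ t := Real.div_rpow ha.le (by norm_num) t
    have h3 : (1:ℝ)/2 ≤ 2 ^ t := by
      have : (2:ℝ) ^ (-1:ℝ) ≤ 2 ^ t := Real.rpow_le_rpow_of_exponent_le one_le_two (by linarith)
      rw [Real.rpow_neg_one] at this
      linarith
    have h4 : 0 < (2:ℝ) ^ t := by positivity
    have h5 : a ^ t / 2 ^ t ≤ a ^ t / (1/2) :=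
      div_le_div_of_nonneg_left hat.le (by norm_num) h3
    have h6 : a ^ t / (1/2 : ℝ) = 2 * a ^ t := by ring
    linarith [h2 ▸ h1]




lemma rpow_sub_two {r : ℝ} (hr : 0 < r) (t : ℝ) : r ^ (t-2) = r ^ t / r ^ 2 := by
  rw [Real.rpow_sub hr, show (2:ℝ) = ((2:ℕ):ℝ) by norm_num, Real.rpow_natCast]

lemma rpow_sub_one {r : ℝ} (hr : 0 < r) (t : ℝ) : r ^ (t-1) = r ^ t / r := by
  rw [Real.rpow_sub hr, Real.rpow_one]

lemma rpow_split {r : ℝ} (hr : 0 < r) (t : ℝ) : r ^ (t-2) * r = r ^ (t-1) := by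
  rw [show t-1 = (t-2)+1 by ring, Real.rpow_add hr, Real.rpow_one]

lemma integrableOn_g (ht : -1 < t) {r : ℝ} (hr : 0 < r) (c : ℝ) :
    IntegrableOn (fun x => x ^ t / (x ^ 2 + r ^ 2)) (Ioo 0 c) := by
  have := integrableOn_f (ϑ := c) (lam := 0) (nu := r) (ε := r ^ 2) ht (by positivity)
    measurableSet_Ioo (subset_refl _) (fun x _ => by nlinarith)
  simpa using this

lemma g_nonneg_ae {r c : ℝ} :
    (0 : ℝ → ℝ) ≤ᶠ[ae (volume.restrict (Ioo (0:ℝ) c))] fun x => x ^ t / (x ^ 2 + r ^ 2) := by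
  filter_upwards [ae_restrict_mem measurableSet_Ioo] with x hx
  simp only [Pi.zero_apply]
  have : 0 ≤ x ^ t := Real.rpow_nonneg hx.1.le t
  positivity

/-- the model integral J(r) = ∫₀^ϑ x^t/(x²+r²), lower bound -/
lemma J_lower {ϑ : ℝ} (ht₁ : -1 < t) (ht₂ : t ≤ 1) {r : ℝ} (hr : 0 < r) (hrϑ : r ≤ ϑ) :
    r ^ (t-1) / 8 ≤ ∫ x in Ioo (0:ℝ) ϑ, x ^ t / (x ^ 2 + r ^ 2) := by
  have hϑ : 0 < ϑ := lt_of_lt_of_le hr hrϑ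
  have hint : IntegrableOn (fun x => x ^ t / (x ^ 2 + r ^ 2)) (Ioo 0 ϑ) := integrableOn_g ht₁ hr ϑ
  have hsub : Ioo (r/2) r ⊆ Ioo (0:ℝ) ϑ := fun x hx =>
    ⟨lt_trans (by linarith) hx.1, lt_of_lt_of_le hx.2 hrϑ⟩
  have step1 : ∫ x in Ioo (r/2) r, x ^ t / (x ^ 2 + r ^ 2)
      ≤ ∫ x in Ioo (0:ℝ) ϑ, x ^ t / (x ^ 2 + r ^ 2) :=
    setIntegral_mono_set hint g_nonneg_ae (Filter.Eventually.of_forall hsub)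
  have key : ∀ x ∈ Ioo (r/2) r, r ^ (t-2) / 4 ≤ x ^ t / (x ^ 2 + r ^ 2) := by
    intro x hx
    have hx0 : 0 < x := lt_trans (by linarith) hx.1
    have hnum : r ^ t / 2 ≤ x ^ t := rpow_lower ht₂ hr hx.1.le hx.2.le
    have hden : x ^ 2 + r ^ 2 ≤ 2 * r ^ 2 := by nlinarith [hx.2]
    have hrt : 0 ≤ r ^ t := Real.rpow_nonneg hr.le t
    have h1 : r ^ t / 2 / (2 * r ^ 2) ≤ x ^ t / (x ^ 2 + r ^ 2) :=
      div_le_div₀ (Real.rpow_nonneg hx0.le t) hnum (by positivity) hden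
    have h2 : r ^ t / 2 / (2 * r ^ 2) = r ^ (t-2) / 4 := by
      rw [rpow_sub_two hr]
      field_simp
      norm_num
    linarith [h2 ▸ h1]
  have hvol : (volume (Ioo (r/2) r)).toReal = r/2 := by
    rw [Real.volume_Ioo, ENNReal.toReal_ofReal (by linarith)]; ring
  have step2 := setIntegral_ge_of_const_le measurableSet_Ioo
    (by rw [Real.volume_Ioo]; exact ENNReal.ofReal_ne_top) key (hint.mono_set hsub)
  rw [measureReal_def, hvol, smul_eq_mul, mul_comm] at step2
  have : r ^ (t-2) / 4 * (r/2) = r ^ (t-1) / 8 := by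
    rw [show r ^ (t-2) / 4 * (r/2) = (r ^ (t-2) * r) / 8 by ring, rpow_split hr]
  linarith

/-- the model integral J(r), upper bound -/
lemma J_upper {ϑ : ℝ} (ht₁ : -1 < t) (ht₂ : t < 1) {r : ℝ} (hr : 0 < r) (hrϑ : r ≤ ϑ) :
    (∫ x in Ioo (0:ℝ) ϑ, x ^ t / (x ^ 2 + r ^ 2))
      ≤ ((t+1)⁻¹ + (1-t)⁻¹) * r ^ (t-1) := by
  have hϑ : 0 < ϑ := lt_of_lt_of_le hr hrϑ
  have ht1 : 0 < t + 1 := by linarith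
  have ht2 : 0 < 1 - t := by linarith
  have hrt1 : 0 < r ^ (t-1) := Real.rpow_pos_of_pos hr _
  -- bound on (0, r]
  have bound1 : ∀ c : ℝ, c ≤ r → (∫ x in Ioo (0:ℝ) c, x ^ t / (x ^ 2 + r ^ 2))
      ≤ (t+1)⁻¹ * r ^ (t-1) := by
    intro c hc
    rcases le_or_gt c 0 with h0 | h0
    · rw [Ioo_eq_empty (by intro hh; linarith)]
      simp; positivity
    · have hle : ∀ x ∈ Ioo (0:ℝ) c, x ^ t / (x ^ 2 + r ^ 2) ≤ (r ^ 2)⁻¹ * x ^ t := by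
        intro x hx
        have hxt : 0 ≤ x ^ t := Real.rpow_nonneg hx.1.le t
        calc x ^ t / (x ^ 2 + r ^ 2) ≤ x ^ t / r ^ 2 :=
              div_le_div_of_nonneg_left hxt (by positivity) (by nlinarith)
          _ = (r ^ 2)⁻¹ * x ^ t := by ring
      have hint1 : IntegrableOn (fun x => x ^ t / (x ^ 2 + r ^ 2)) (Ioo 0 c) :=
        integrableOn_g ht₁ hr c
      have hint2 : IntegrableOn (fun x : ℝ => (r ^ 2)⁻¹ * x ^ t) (Ioo 0 c) :=
        (integrableOn_rpow_Ioo ht₁ c).const_mul _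
      calc (∫ x in Ioo (0:ℝ) c, x ^ t / (x ^ 2 + r ^ 2))
          ≤ ∫ x in Ioo (0:ℝ) c, (r ^ 2)⁻¹ * x ^ t :=
            setIntegral_mono_on hint1 hint2 measurableSet_Ioo hle
        _ = (r ^ 2)⁻¹ * (c ^ (t+1) / (t+1)) := by
            rw [integral_const_mul, setInt_rpow ht₁ h0.le]
        _ ≤ (r ^ 2)⁻¹ * (r ^ (t+1) / (t+1)) := by
            have h : c ^ (t+1) ≤ r ^ (t+1) := Real.rpow_le_rpow h0.le hc (by linarith)
            gcongr
        _ = (t+1)⁻¹ * r ^ (t-1) := by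
            rw [show t - 1 = (t+1) - 2 by ring, rpow_sub_two hr (t+1)]
            field_simp
  rcases eq_or_lt_of_le hrϑ with hEq | hlt
  · subst hEq
    have := bound1 r le_rfl
    have h2 : 0 ≤ (1-t)⁻¹ * r ^ (t-1) := by positivity
    nlinarith
  · have hsplit : Ioc (0:ℝ) r ∪ Ioo r ϑ = Ioo 0 ϑ := Ioc_union_Ioo_eq_Ioo hr.le hlt
    have hdisj : Disjoint (Ioc (0:ℝ) r) (Ioo r ϑ) :=
      Set.disjoint_left.mpr fun x hx hx' => absurd hx.2 (not_le.mpr hx'.1)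
    have hi1 : IntegrableOn (fun x => x ^ t / (x ^ 2 + r ^ 2)) (Ioc 0 r) :=
      (integrableOn_g ht₁ hr ϑ).mono_set (fun x hx => ⟨hx.1, lt_of_le_of_lt hx.2 hlt⟩)
    have hi2 : IntegrableOn (fun x => x ^ t / (x ^ 2 + r ^ 2)) (Ioo r ϑ) :=
      (integrableOn_g ht₁ hr ϑ).mono_set (fun x hx => ⟨lt_trans hr hx.1, hx.2⟩)
    have hunion : (∫ x in Ioo (0:ℝ) ϑ, x ^ t / (x ^ 2 + r ^ 2))
        = (∫ x in Ioc (0:ℝ) r, x ^ t / (x ^ 2 + r ^ 2))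
          + ∫ x in Ioo r ϑ, x ^ t / (x ^ 2 + r ^ 2) := by
      rw [← hsplit, setIntegral_union hdisj measurableSet_Ioo hi1 hi2]
    have hA : (∫ x in Ioc (0:ℝ) r, x ^ t / (x ^ 2 + r ^ 2)) ≤ (t+1)⁻¹ * r ^ (t-1) := by
      rw [integral_Ioc_eq_integral_Ioo]
      exact bound1 r le_rfl
    -- tail piece
    have hzero : (0:ℝ) ∉ uIcc r ϑ := by
      rw [uIcc_of_le hrϑ]
      intro hc'
      exact absurd hc'.1 (not_le.mpr hr)
    have hitail : IntegrableOn (fun x : ℝ => x ^ (t-2)) (Ioo r ϑ) :=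
      ((intervalIntegrable_iff_integrableOn_Ioc_of_le hrϑ).1
        (intervalIntegral.intervalIntegrable_rpow (Or.inr hzero))).mono_set Ioo_subset_Ioc_self
    have hle2 : ∀ x ∈ Ioo r ϑ, x ^ t / (x ^ 2 + r ^ 2) ≤ x ^ (t-2) := by
      intro x hx
      have hx0 : 0 < x := lt_trans hr hx.1
      have hxt : 0 ≤ x ^ t := Real.rpow_nonneg hx0.le t
      calc x ^ t / (x ^ 2 + r ^ 2) ≤ x ^ t / x ^ 2 :=
            div_le_div_of_nonneg_left hxt (by positivity) (by nlinarith)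
        _ = x ^ (t-2) := (rpow_sub_two hx0 t).symm
    have hB : (∫ x in Ioo r ϑ, x ^ t / (x ^ 2 + r ^ 2)) ≤ (1-t)⁻¹ * r ^ (t-1) := by
      have s1 : (∫ x in Ioo r ϑ, x ^ t / (x ^ 2 + r ^ 2)) ≤ ∫ x in Ioo r ϑ, x ^ (t-2) :=
        setIntegral_mono_on hi2 hitail measurableSet_Ioo hle2
      have s2 : (∫ x in Ioo r ϑ, x ^ (t-2)) = (ϑ ^ (t-1) - r ^ (t-1)) / (t-1) := by
        rw [← integral_Ioc_eq_integral_Ioo, ← intervalIntegral.integral_of_le hrϑ,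
          integral_rpow (Or.inr ⟨by intro hc'; linarith, hzero⟩)]
        rw [show t - 2 + 1 = t - 1 by ring]
      have s3 : (ϑ ^ (t-1) - r ^ (t-1)) / (t-1) ≤ (1-t)⁻¹ * r ^ (t-1) := by
        rw [div_le_iff_of_neg (by linarith : t - 1 < 0)]
        have e : (1-t)⁻¹ * r ^ (t-1) * (t-1) = - r ^ (t-1) := by
          field_simp
          ring
        rw [e]
        linarith [Real.rpow_nonneg (le_trans hr.le hrϑ) (t-1)]
      linarith
    linarith



lemma f_nonneg_ae {lam nu c : ℝ} :
    (0 : ℝ → ℝ) ≤ᶠ[ae (volume.restrict (Ioo (0:ℝ) c))]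
      fun x => x ^ t / ((x - lam) ^ 2 + nu ^ 2) := by
  filter_upwards [ae_restrict_mem measurableSet_Ioo] with x hx
  simp only [Pi.zero_apply]
  have : 0 ≤ x ^ t := Real.rpow_nonneg hx.1.le t
  positivity

/-- tail integral of x^(t-2) -/
lemma tail_bound {ϑ : ℝ} (ht₂ : t < 1) {a : ℝ} (h0 : 0 < a) (hab : a ≤ ϑ) :
    (∫ x in Ioo a ϑ, x ^ (t-2)) ≤ (1-t)⁻¹ * a ^ (t-1) := by
  have hzero : (0:ℝ) ∉ uIcc a ϑ := by
    rw [uIcc_of_le hab]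
    intro hc'
    exact absurd hc'.1 (not_le.mpr h0)
  have s2 : (∫ x in Ioo a ϑ, x ^ (t-2)) = (ϑ ^ (t-1) - a ^ (t-1)) / (t-1) := by
    rw [← integral_Ioc_eq_integral_Ioo, ← intervalIntegral.integral_of_le hab,
      integral_rpow (Or.inr ⟨by intro hc'; linarith, hzero⟩)]
    rw [show t - 2 + 1 = t - 1 by ring]
  have ht2 : 0 < 1 - t := by linarith
  rw [s2, div_le_iff_of_neg (by linarith : t - 1 < 0)]
  have e : (1-t)⁻¹ * a ^ (t-1) * (t-1) = - a ^ (t-1) := by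
    field_simp
    ring
  rw [e]
  linarith [Real.rpow_nonneg (le_trans h0.le hab) (t-1)]

lemma tail_integrable {ϑ a : ℝ} (h0 : 0 < a) (hab : a ≤ ϑ) {s : Set ℝ}
    (hsub : s ⊆ Icc a ϑ) : IntegrableOn (fun x : ℝ => x ^ (t-2)) s := by
  have hzero : (0:ℝ) ∉ uIcc a ϑ := by
    rw [uIcc_of_le hab]
    intro hc'
    exact absurd hc'.1 (not_le.mpr h0)
  have h := (intervalIntegral.intervalIntegrable_rpow (μ := volume)
    (r := t - 2) (a := a) (b := ϑ) (Or.inr hzero)).1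
  have h2 : IntegrableOn (fun x : ℝ => x ^ (t-2)) (Icc a ϑ) :=
    h.congr_set_ae Ioc_ae_eq_Icc.symm
  exact h2.mono_set hsub

/-- Cases (b),(c) after reduction to the model integral -/
lemma case_bc (ht₁ : -1 < t) (ht₂ : t < 1) {ϑ lam nu r : ℝ} (hr : 0 < r) (hrϑ : r ≤ ϑ)
    (hd_low : ∀ x ∈ Ioo (0:ℝ) ϑ, (x ^ 2 + r ^ 2)/4 ≤ (x - lam) ^ 2 + nu ^ 2)
    (hd_high : ∀ x ∈ Ioo (0:ℝ) ϑ, (x - lam) ^ 2 + nu ^ 2 ≤ 2*(x ^ 2 + r ^ 2)) :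
    r ^ (t-1) / 16 ≤ (∫ x in Ioo (0:ℝ) ϑ, x ^ t / ((x - lam) ^ 2 + nu ^ 2)) ∧
    (∫ x in Ioo (0:ℝ) ϑ, x ^ t / ((x - lam) ^ 2 + nu ^ 2))
      ≤ 4 * ((t+1)⁻¹ + (1-t)⁻¹) * r ^ (t-1) := by
  have hϑ : 0 < ϑ := lt_of_lt_of_le hr hrϑ
  have hfint : IntegrableOn (fun x => x ^ t / ((x - lam) ^ 2 + nu ^ 2)) (Ioo 0 ϑ) := by
    apply integrableOn_f ht₁ (ε := r ^ 2 / 4) (by positivity) measurableSet_Ioo (subset_refl _)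
    intro x hx
    have := hd_low x hx
    nlinarith [sq_nonneg x]
  have hgint : IntegrableOn (fun x => x ^ t / (x ^ 2 + r ^ 2)) (Ioo 0 ϑ) :=
    integrableOn_g ht₁ hr ϑ
  constructor
  · have step : (∫ x in Ioo (0:ℝ) ϑ, (1/2) * (x ^ t / (x ^ 2 + r ^ 2)))
        ≤ ∫ x in Ioo (0:ℝ) ϑ, x ^ t / ((x - lam) ^ 2 + nu ^ 2) := by
      apply setIntegral_mono_on (hgint.const_mul _) hfint measurableSet_Ioo
      intro x hx
      have hx0 : 0 < x := hx.1
      have hxt : 0 ≤ x ^ t := Real.rpow_nonneg hx0.le t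
      have h1 : x ^ t / (2*(x ^ 2 + r ^ 2)) ≤ x ^ t / ((x - lam) ^ 2 + nu ^ 2) := by
        apply div_le_div_of_nonneg_left hxt ?_ (hd_high x hx)
        nlinarith [hd_low x hx, sq_nonneg x]
      calc (1/2) * (x ^ t / (x ^ 2 + r ^ 2)) = x ^ t / (2*(x ^ 2 + r ^ 2)) := by
            have hB : x ^ 2 + r ^ 2 ≠ 0 := by positivity
            field_simp
        _ ≤ _ := h1
    rw [integral_const_mul] at step
    have := J_lower ht₁ ht₂.le hr hrϑ
    nlinarith
  · have step : (∫ x in Ioo (0:ℝ) ϑ, x ^ t / ((x - lam) ^ 2 + nu ^ 2))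
        ≤ ∫ x in Ioo (0:ℝ) ϑ, 4 * (x ^ t / (x ^ 2 + r ^ 2)) := by
      apply setIntegral_mono_on hfint (hgint.const_mul _) measurableSet_Ioo
      intro x hx
      have hx0 : 0 < x := hx.1
      have hxt : 0 ≤ x ^ t := Real.rpow_nonneg hx0.le t
      have h1 : x ^ t / ((x - lam) ^ 2 + nu ^ 2) ≤ x ^ t / ((x ^ 2 + r ^ 2)/4) :=
        div_le_div_of_nonneg_left hxt (by positivity) (hd_low x hx)
      calc x ^ t / ((x - lam) ^ 2 + nu ^ 2) ≤ x ^ t / ((x ^ 2 + r ^ 2)/4) := h1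
        _ = 4 * (x ^ t / (x ^ 2 + r ^ 2)) := by
            have hB : x ^ 2 + r ^ 2 ≠ 0 := by positivity
            field_simp
    rw [integral_const_mul] at step
    have := J_upper ht₁ ht₂ hr hrϑ
    nlinarith [Real.rpow_pos_of_pos hr (t-1)]



/-- Case (a): lower bound -/
lemma case_a_lower (ht₁ : -1 < t) (ht₂ : t < 1) {ϑ lam nu : ℝ} (hnu : 0 < nu) (hnl : nu < lam)
    (hlϑ : lam ≤ ϑ) :
    lam ^ t / nu / 8 ≤ ∫ x in Ioo (0:ℝ) ϑ, x ^ t / ((x - lam) ^ 2 + nu ^ 2) := by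
  have hlam : 0 < lam := lt_trans hnu hnl
  have hϑ : 0 < ϑ := lt_of_lt_of_le hlam hlϑ
  have hfint : IntegrableOn (fun x => x ^ t / ((x - lam) ^ 2 + nu ^ 2)) (Ioo 0 ϑ) := by
    apply integrableOn_f ht₁ (ε := nu ^ 2) (by positivity) measurableSet_Ioo
      (subset_refl _)
    intro x _; nlinarith [sq_nonneg (x - lam)]
  have hsub : Ioo (lam - nu/2) lam ⊆ Ioo (0:ℝ) ϑ := fun x hx =>
    ⟨lt_trans (by linarith) hx.1, lt_of_lt_of_le hx.2 hlϑ⟩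
  have step1 : (∫ x in Ioo (lam - nu/2) lam, x ^ t / ((x - lam) ^ 2 + nu ^ 2))
      ≤ ∫ x in Ioo (0:ℝ) ϑ, x ^ t / ((x - lam) ^ 2 + nu ^ 2) :=
    setIntegral_mono_set hfint f_nonneg_ae (Filter.Eventually.of_forall hsub)
  have key : ∀ x ∈ Ioo (lam - nu/2) lam,
      lam ^ t / (4 * nu ^ 2) ≤ x ^ t / ((x - lam) ^ 2 + nu ^ 2) := by
    intro x hx
    have hx0 : 0 < x := (hsub hx).1
    have hnum : lam ^ t / 2 ≤ x ^ t := rpow_lower ht₂.le hlam (by linarith [hx.1]) hx.2.le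
    have hden : (x - lam) ^ 2 + nu ^ 2 ≤ 2 * nu ^ 2 := by nlinarith [hx.1, hx.2]
    have h1 : lam ^ t / 2 / (2 * nu ^ 2) ≤ x ^ t / ((x - lam) ^ 2 + nu ^ 2) :=
      div_le_div₀ (Real.rpow_nonneg hx0.le t) hnum (by positivity) hden
    have h2 : lam ^ t / 2 / (2 * nu ^ 2) = lam ^ t / (4 * nu ^ 2) := by ring
    linarith [h2 ▸ h1]
  have hvol : (volume (Ioo (lam - nu/2) lam)).toReal = nu/2 := by
    rw [Real.volume_Ioo, ENNReal.toReal_ofReal (by linarith)]; ring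
  have step2 := setIntegral_ge_of_const_le measurableSet_Ioo
    (by rw [Real.volume_Ioo]; exact ENNReal.ofReal_ne_top) key (hfint.mono_set hsub)
  rw [measureReal_def, hvol, smul_eq_mul, mul_comm] at step2
  have e : lam ^ t / (4 * nu ^ 2) * (nu/2) = lam ^ t / nu / 8 := by
    field_simp
    ring
  linarith [e ▸ step2]

set_option maxHeartbeats 2000000 in
/-- Case (a): upper bound -/
lemma case_a_upper (ht₁ : -1 < t) (ht₂ : t < 1) {ϑ lam nu : ℝ} (hnu : 0 < nu)
    (hnl : nu < lam) (hlϑ : lam ≤ ϑ) :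
    (∫ x in Ioo (0:ℝ) ϑ, x ^ t / ((x - lam) ^ 2 + nu ^ 2))
      ≤ (4*(t+1)⁻¹ + 2*Real.pi + 4*(1-t)⁻¹) * (lam ^ t / nu) := by
  have hlam : 0 < lam := lt_trans hnu hnl
  have hϑ : 0 < ϑ := lt_of_lt_of_le hlam hlϑ
  have ht1 : 0 < t + 1 := by linarith
  have ht2 : 0 < 1 - t := by linarith
  have hlamt : 0 < lam ^ t := Real.rpow_pos_of_pos hlam t
  have hratio : 0 < lam ^ t / nu := by positivity
  have hlt_ratio : lam ^ (t - 1) ≤ lam ^ t / nu := by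
    rw [rpow_sub_one hlam]
    exact div_le_div_of_nonneg_left hlamt.le hnu hnl.le
  set m := min (2*lam) ϑ with hm
  have hml : lam ≤ m := le_min (by linarith) hlϑ
  have hmϑ : m ≤ ϑ := min_le_right _ _
  have hm2 : m ≤ 2*lam := min_le_left _ _
  have hp : (0:ℝ) < lam/2 := by linarith
  have hpm : lam/2 < m := lt_of_lt_of_le (by linarith) hml
  have hpϑ : lam/2 < ϑ := lt_of_lt_of_le hpm hmϑ
  -- denominators positive everywhere
  have hDpos : ∀ x : ℝ, 0 < (x - lam) ^ 2 + nu ^ 2 := fun x => by positivity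
  have hDν : ∀ x ∈ Ioo (0:ℝ) ϑ, nu ^ 2 ≤ (x - lam) ^ 2 + nu ^ 2 := fun x _ => by
    nlinarith [sq_nonneg (x - lam)]
  -- integrability on subsets
  have hfint : ∀ s : Set ℝ, MeasurableSet s → s ⊆ Ioo (0:ℝ) ϑ →
      IntegrableOn (fun x => x ^ t / ((x - lam) ^ 2 + nu ^ 2)) s := fun s hs hsub =>
    integrableOn_f ht₁ (ε := nu ^ 2) (by positivity) hs hsub (fun x hx => hDν x (hsub hx))
  -- splitting
  have hsplit1 : Ioc (0:ℝ) (lam/2) ∪ Ioo (lam/2) ϑ = Ioo 0 ϑ :=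
    Ioc_union_Ioo_eq_Ioo hp.le hpϑ
  have hsplit2 : Ioo (lam/2) m ∪ Ico m ϑ = Ioo (lam/2) ϑ :=
    Ioo_union_Ico_eq_Ioo hpm hmϑ
  have hsub1 : Ioc (0:ℝ) (lam/2) ⊆ Ioo 0 ϑ := fun x hx => ⟨hx.1, lt_of_le_of_lt hx.2 hpϑ⟩
  have hsub2 : Ioo (lam/2) m ⊆ Ioo (0:ℝ) ϑ := fun x hx =>
    ⟨lt_trans hp hx.1, lt_of_lt_of_le hx.2 hmϑ⟩
  have hsub3 : Ico m ϑ ⊆ Ioo (0:ℝ) ϑ := fun x hx =>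
    ⟨lt_of_lt_of_le (lt_of_lt_of_le hlam hml) hx.1, hx.2⟩
  have hi1 := hfint _ measurableSet_Ioc hsub1
  have hi2 := hfint _ measurableSet_Ioo hsub2
  have hi3 := hfint _ measurableSet_Ico hsub3
  have hi23 := hfint _ measurableSet_Ioo (fun x (hx : x ∈ Ioo (lam/2) ϑ) =>
    ⟨lt_trans hp hx.1, hx.2⟩)
  have hd1 : Disjoint (Ioc (0:ℝ) (lam/2)) (Ioo (lam/2) ϑ) :=
    Set.disjoint_left.mpr fun x hx hx' => absurd hx.2 (not_le.mpr hx'.1)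
  have hd2 : Disjoint (Ioo (lam/2) m) (Ico m ϑ) :=
    Set.disjoint_left.mpr fun x hx hx' => absurd hx.2 (not_lt.mpr hx'.1)
  have hunion : (∫ x in Ioo (0:ℝ) ϑ, x ^ t / ((x - lam) ^ 2 + nu ^ 2))
      = (∫ x in Ioc (0:ℝ) (lam/2), x ^ t / ((x - lam) ^ 2 + nu ^ 2))
        + ((∫ x in Ioo (lam/2) m, x ^ t / ((x - lam) ^ 2 + nu ^ 2))
          + ∫ x in Ico m ϑ, x ^ t / ((x - lam) ^ 2 + nu ^ 2)) := by
    rw [← hsplit1, setIntegral_union hd1 measurableSet_Ioo hi1 hi23]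
    congr 1
    rw [← hsplit2, setIntegral_union hd2 measurableSet_Ico hi2 hi3]
  -- piece 1
  have hI1 : (∫ x in Ioc (0:ℝ) (lam/2), x ^ t / ((x - lam) ^ 2 + nu ^ 2))
      ≤ 4*(t+1)⁻¹ * (lam ^ t / nu) := by
    have hb : IntegrableOn (fun x : ℝ => (4 / lam ^ 2) * x ^ t) (Ioc 0 (lam/2)) :=
      ((integrableOn_rpow_Ioo ht₁ ϑ).mono_set hsub1).const_mul _
    have hle : ∀ x ∈ Ioc (0:ℝ) (lam/2),
        x ^ t / ((x - lam) ^ 2 + nu ^ 2) ≤ (4 / lam ^ 2) * x ^ t := by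
      intro x hx
      have hxt : 0 ≤ x ^ t := Real.rpow_nonneg hx.1.le t
      have hden : lam ^ 2 / 4 ≤ (x - lam) ^ 2 + nu ^ 2 := by
        nlinarith [sq_nonneg nu,
          mul_nonneg (by linarith [hx.2] : (0:ℝ) ≤ lam/2 - x)
            (by linarith [hx.2, hx.1] : (0:ℝ) ≤ 3*lam/2 - x)]
      calc x ^ t / ((x - lam) ^ 2 + nu ^ 2) ≤ x ^ t / (lam ^ 2 / 4) :=
            div_le_div_of_nonneg_left hxt (by positivity) hden
        _ = (4 / lam ^ 2) * x ^ t := by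
            field_simp
    have step : (∫ x in Ioc (0:ℝ) (lam/2), x ^ t / ((x - lam) ^ 2 + nu ^ 2))
        ≤ ∫ x in Ioc (0:ℝ) (lam/2), (4 / lam ^ 2) * x ^ t :=
      setIntegral_mono_on hi1 hb measurableSet_Ioc hle
    have heq : (∫ x in Ioc (0:ℝ) (lam/2), (4 / lam ^ 2) * x ^ t)
        = (4 / lam ^ 2) * ((lam/2) ^ (t+1) / (t+1)) := by
      rw [integral_Ioc_eq_integral_Ioo, integral_const_mul, setInt_rpow ht₁ (by linarith)]
    have ha : (lam/2) ^ (t+1) ≤ lam ^ (t+1) :=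
      Real.rpow_le_rpow (by positivity) (by linarith) (by linarith)
    have h1 : (4 / lam ^ 2) * ((lam/2) ^ (t+1) / (t+1))
        ≤ (4 / lam ^ 2) * (lam ^ (t+1) / (t+1)) := by gcongr
    have h2 : (4 / lam ^ 2) * (lam ^ (t+1) / (t+1)) = 4*(t+1)⁻¹ * lam ^ (t-1) := by
      rw [show t - 1 = (t+1) - 2 by ring, rpow_sub_two hlam]
      field_simp
    have h3 : 4*(t+1)⁻¹ * lam ^ (t-1) ≤ 4*(t+1)⁻¹ * (lam ^ t / nu) :=
      mul_le_mul_of_nonneg_left hlt_ratio (by positivity)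
    linarith
  -- piece 2
  have hI2 : (∫ x in Ioo (lam/2) m, x ^ t / ((x - lam) ^ 2 + nu ^ 2))
      ≤ 2*Real.pi * (lam ^ t / nu) := by
    have hbint : IntegrableOn
        (fun x : ℝ => 2*lam ^ t * ((x - lam) ^ 2 + nu ^ 2)⁻¹) (Ioo (lam/2) m) :=
      (integrableOn_inv_quad lam hnu (a := lam/2) (b := m) Ioo_subset_Ioc_self
        measurableSet_Ioo).const_mul _
    have hle : ∀ x ∈ Ioo (lam/2) m, x ^ t / ((x - lam) ^ 2 + nu ^ 2)
        ≤ 2*lam ^ t * ((x - lam) ^ 2 + nu ^ 2)⁻¹ := by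
      intro x hx
      have hnum : x ^ t ≤ 2 * lam ^ t :=
        rpow_upper ht₁ ht₂.le hlam hx.1.le (le_trans hx.2.le hm2)
      rw [div_eq_mul_inv]
      exact mul_le_mul_of_nonneg_right hnum (by positivity)
    have step : (∫ x in Ioo (lam/2) m, x ^ t / ((x - lam) ^ 2 + nu ^ 2))
        ≤ ∫ x in Ioo (lam/2) m, 2*lam ^ t * ((x - lam) ^ 2 + nu ^ 2)⁻¹ :=
      setIntegral_mono_on hi2 hbint measurableSet_Ioo hle
    have heq : (∫ x in Ioo (lam/2) m, 2*lam ^ t * ((x - lam) ^ 2 + nu ^ 2)⁻¹)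
        = 2*lam ^ t * ∫ x in Ioo (lam/2) m, ((x - lam) ^ 2 + nu ^ 2)⁻¹ :=
      integral_const_mul _ _
    have hq := int_inv_quad_le lam hnu (lam/2) m
    have h1 : 2*lam ^ t * (∫ x in Ioo (lam/2) m, ((x - lam) ^ 2 + nu ^ 2)⁻¹)
        ≤ 2*lam ^ t * (Real.pi / nu) :=
      mul_le_mul_of_nonneg_left hq (by positivity)
    have h2 : 2*lam ^ t * (Real.pi / nu) = 2*Real.pi * (lam ^ t / nu) := by ring
    linarith
  -- piece 3
  have hI3 : (∫ x in Ico m ϑ, x ^ t / ((x - lam) ^ 2 + nu ^ 2))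
      ≤ 4*(1-t)⁻¹ * (lam ^ t / nu) := by
    have hRHS : 0 ≤ 4*(1-t)⁻¹ * (lam ^ t / nu) := by positivity
    rcases min_cases (2*lam) ϑ with ⟨hmeq, hcase⟩ | ⟨hmeq, hcase⟩
    · -- m = 2*lam, 2*lam ≤ ϑ
      have hmeq' : m = 2*lam := by rw [hm, hmeq]
      have h2l : (0:ℝ) < 2*lam := by linarith
      rw [hmeq']
      have hbint : IntegrableOn (fun x : ℝ => 4 * x ^ (t-2)) (Ico (2*lam) ϑ) :=
        (tail_integrable h2l hcase Ico_subset_Icc_self).const_mul _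
      have hle : ∀ x ∈ Ico (2*lam) ϑ,
          x ^ t / ((x - lam) ^ 2 + nu ^ 2) ≤ 4 * x ^ (t-2) := by
        intro x hx
        have hx0 : 0 < x := lt_of_lt_of_le h2l hx.1
        have hxt : 0 ≤ x ^ t := Real.rpow_nonneg hx0.le t
        have h' : x/2 ≤ x - lam := by linarith [hx.1]
        have hsq : (x/2) ^ 2 ≤ (x - lam) ^ 2 := pow_le_pow_left₀ (by positivity) h' 2
        have hden : x ^ 2 / 4 ≤ (x - lam) ^ 2 + nu ^ 2 := by nlinarith [sq_nonneg nu]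
        calc x ^ t / ((x - lam) ^ 2 + nu ^ 2) ≤ x ^ t / (x ^ 2 / 4) :=
              div_le_div_of_nonneg_left hxt (by positivity) hden
          _ = 4 * x ^ (t-2) := by
              rw [rpow_sub_two hx0, div_div_eq_mul_div]
              ring
      have hi3' : IntegrableOn (fun x => x ^ t / ((x - lam) ^ 2 + nu ^ 2)) (Ico (2*lam) ϑ) := by
        rw [← hmeq']; exact hi3
      have step : (∫ x in Ico (2*lam) ϑ, x ^ t / ((x - lam) ^ 2 + nu ^ 2))
          ≤ ∫ x in Ico (2*lam) ϑ, 4 * x ^ (t-2) :=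
        setIntegral_mono_on hi3' hbint measurableSet_Ico hle
      have heq : (∫ x in Ico (2*lam) ϑ, 4 * x ^ (t-2))
          = 4 * ∫ x in Ioo (2*lam) ϑ, x ^ (t-2) := by
        rw [integral_Ico_eq_integral_Ioo, integral_const_mul]
      have htail := tail_bound ht₂ h2l hcase
      have h2a : ((2:ℝ)*lam) ^ (t-1) ≤ lam ^ (t-1) :=
        Real.rpow_le_rpow_of_nonpos hlam (by linarith) (by linarith)
      have h3 : 4 * (∫ x in Ioo (2*lam) ϑ, x ^ (t-2)) ≤ 4 * ((1-t)⁻¹ * lam ^ (t-1)) := by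
        have : (1-t)⁻¹ * (2*lam) ^ (t-1) ≤ (1-t)⁻¹ * lam ^ (t-1) :=
          mul_le_mul_of_nonneg_left h2a (by positivity)
        linarith
      have h4 : 4 * ((1-t)⁻¹ * lam ^ (t-1)) ≤ 4*(1-t)⁻¹ * (lam ^ t / nu) := by
        have := mul_le_mul_of_nonneg_left hlt_ratio (by positivity : (0:ℝ) ≤ (1-t)⁻¹)
        linarith
      linarith
    · -- m = ϑ
      have hmeq' : m = ϑ := by rw [hm, hmeq]
      rw [hmeq', Ico_self]
      simpa using hRHS
  linarith



lemma two_rpow_ge (s : ℝ) (hs : -2 ≤ s) : (1/4 : ℝ) ≤ 2 ^ s := by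
  have h := Real.rpow_le_rpow_of_exponent_le (x := 2) one_le_two hs
  have h4 : (2:ℝ) ^ (-2:ℝ) = 1/4 := by
    rw [show (-2:ℝ) = ((-2 : ℤ):ℝ) by norm_num, Real.rpow_intCast]
    norm_num
  calc (1/4 : ℝ) = 2 ^ (-2:ℝ) := h4.symm
    _ ≤ 2 ^ s := h


set_option maxHeartbeats 1000000 in
/-- **Integral estimate** (Lemma 3.4): two-sided bounds for
`∫_0^ϑ x^t ((x-λ)² + ν²)⁻¹ dx` in the three regimes of `ω = λ + iν`. -/
theorem edge_integral_estimate (ϑ t : ℝ) (hϑ : 0 < ϑ) (ht₁ : -1 < t) (ht₂ : t < 1) :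
    ∃ C : ℝ, 1 < C ∧ ∀ lam nu : ℝ, 0 ≤ nu → Real.sqrt (lam ^ 2 + nu ^ 2) ≤ ϑ →
      ((0 < nu → nu < lam →
        C⁻¹ * (lam ^ t / nu) ≤ (∫ x in Set.Ioo (0 : ℝ) ϑ, x ^ t / ((x - lam) ^ 2 + nu ^ 2)) ∧
        (∫ x in Set.Ioo (0 : ℝ) ϑ, x ^ t / ((x - lam) ^ 2 + nu ^ 2)) ≤ C * (lam ^ t / nu)) ∧
      (lam < 0 → nu < |lam| →
        (C⁻¹ * Real.sqrt (lam ^ 2 + nu ^ 2) ^ (t - 1) ≤ (∫ x in Set.Ioo (0 : ℝ) ϑ, x ^ t / ((x - lam) ^ 2 + nu ^ 2)) ∧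
         (∫ x in Set.Ioo (0 : ℝ) ϑ, x ^ t / ((x - lam) ^ 2 + nu ^ 2)) ≤ C * Real.sqrt (lam ^ 2 + nu ^ 2) ^ (t - 1)) ∧
        (C⁻¹ * |lam| ^ (t - 1) ≤ Real.sqrt (lam ^ 2 + nu ^ 2) ^ (t - 1) ∧
         Real.sqrt (lam ^ 2 + nu ^ 2) ^ (t - 1) ≤ C * |lam| ^ (t - 1))) ∧
      (|lam| < nu →
        C⁻¹ * nu ^ (t - 1) ≤ (∫ x in Set.Ioo (0 : ℝ) ϑ, x ^ t / ((x - lam) ^ 2 + nu ^ 2)) ∧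
        (∫ x in Set.Ioo (0 : ℝ) ϑ, x ^ t / ((x - lam) ^ 2 + nu ^ 2)) ≤ C * nu ^ (t - 1))) := by
  have ht1 : 0 < t + 1 := by linarith
  have ht2 : 0 < 1 - t := by linarith
  have hπ : 0 < Real.pi := Real.pi_pos
  have hinv1 : 0 < (t+1)⁻¹ := by positivity
  have hinv2 : 0 < (1-t)⁻¹ := by positivity
  obtain ⟨C, hC⟩ : ∃ C : ℝ, C = 64*(Real.pi + (t+1)⁻¹ + (1-t)⁻¹) + 64 := ⟨_, rfl⟩
  have hC64 : 64 ≤ C := by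
    rw [hC]; nlinarith
  have hCpos : 0 < C := by linarith
  have hC1 : 1 < C := by linarith
  have hCinv : C⁻¹ ≤ 64⁻¹ := by
    apply inv_anti₀ (by norm_num) hC64
  have hCinvpos : 0 < C⁻¹ := by positivity
  refine ⟨C, hC1, ?_⟩
  intro lam nu hnu0 hωr
  refine ⟨?_, ?_, ?_⟩
  -- Case (a)
  · intro hnu hnl
    have hlam : 0 < lam := lt_trans hnu hnl
    have hlϑ : lam ≤ ϑ := by
      calc lam = Real.sqrt (lam ^ 2) := (Real.sqrt_sq hlam.le).symm
        _ ≤ Real.sqrt (lam ^ 2 + nu ^ 2) := Real.sqrt_le_sqrt (by nlinarith [sq_nonneg nu])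
        _ ≤ ϑ := hωr
    have hlamt : 0 < lam ^ t := Real.rpow_pos_of_pos hlam t
    have hrat : 0 ≤ lam ^ t / nu := by positivity
    constructor
    · have hlow := case_a_lower ht₁ ht₂ hnu hnl hlϑ
      have hsmall : C⁻¹ * (lam ^ t / nu) ≤ (1/8) * (lam ^ t / nu) := by
        apply mul_le_mul_of_nonneg_right _ hrat
        calc C⁻¹ ≤ 64⁻¹ := hCinv
          _ ≤ 1/8 := by norm_num
      linarith
    · have hup := case_a_upper ht₁ ht₂ hnu hnl hlϑ
      have hKC : 4*(t+1)⁻¹ + 2*Real.pi + 4*(1-t)⁻¹ ≤ C := by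
        rw [hC]; linarith
      have := mul_le_mul_of_nonneg_right hKC hrat
      linarith
  -- Case (b)
  · intro hlam hnl
    have h0 : lam ≠ 0 := ne_of_lt hlam
    have habs : 0 < |lam| := abs_pos.mpr h0
    have hlamsq : 0 < lam ^ 2 := by nlinarith [mul_pos (neg_pos.mpr hlam) (neg_pos.mpr hlam)]
    have hsq' : 0 < lam ^ 2 + nu ^ 2 := by nlinarith [sq_nonneg nu]
    set r := Real.sqrt (lam ^ 2 + nu ^ 2) with hrdef
    have hr : 0 < r := Real.sqrt_pos.mpr hsq'
    have hr2 : r ^ 2 = lam ^ 2 + nu ^ 2 := Real.sq_sqrt hsq'.le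
    have hnusq : nu ^ 2 ≤ lam ^ 2 := by nlinarith [sq_abs lam]
    have habs_r : |lam| ≤ r := by
      calc |lam| = Real.sqrt (lam ^ 2) := (Real.sqrt_sq_eq_abs lam).symm
        _ ≤ r := Real.sqrt_le_sqrt (by nlinarith [sq_nonneg nu])
    have hr2abs : r ≤ 2*|lam| := by
      calc r ≤ Real.sqrt ((2*|lam|) ^ 2) := Real.sqrt_le_sqrt (by nlinarith [sq_abs lam])
        _ = 2*|lam| := Real.sqrt_sq (by positivity)
    have hd_low : ∀ x ∈ Ioo (0:ℝ) ϑ, (x ^ 2 + r ^ 2)/4 ≤ (x - lam) ^ 2 + nu ^ 2 := by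
      intro x hx
      nlinarith [hr2, mul_pos hx.1 (neg_pos.mpr hlam)]
    have hd_high : ∀ x ∈ Ioo (0:ℝ) ϑ, (x - lam) ^ 2 + nu ^ 2 ≤ 2*(x ^ 2 + r ^ 2) := by
      intro x _
      nlinarith [hr2, sq_nonneg (x + lam)]
    obtain ⟨hlo, hhi⟩ := case_bc ht₁ ht₂ hr hωr hd_low hd_high
    have hrt : 0 < r ^ (t-1) := Real.rpow_pos_of_pos hr _
    have habs_t : 0 < |lam| ^ (t-1) := Real.rpow_pos_of_pos habs _
    refine ⟨⟨?_, ?_⟩, ?_, ?_⟩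
    · have hsmall : C⁻¹ * r ^ (t-1) ≤ (1/16) * r ^ (t-1) := by
        apply mul_le_mul_of_nonneg_right _ hrt.le
        calc C⁻¹ ≤ 64⁻¹ := hCinv
          _ ≤ 1/16 := by norm_num
      linarith
    · have hKC : 4*((t+1)⁻¹ + (1-t)⁻¹) ≤ C := by rw [hC]; linarith
      have := mul_le_mul_of_nonneg_right hKC hrt.le
      linarith
    · have h1 : ((2:ℝ)*|lam|) ^ (t-1) ≤ r ^ (t-1) :=
        Real.rpow_le_rpow_of_nonpos hr hr2abs (by linarith)
      have h2 : ((2:ℝ)*|lam|) ^ (t-1) = 2 ^ (t-1) * |lam| ^ (t-1) :=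
        Real.mul_rpow (by norm_num) (abs_nonneg lam)
      have h3 : (1/4 : ℝ) ≤ 2 ^ (t-1) := two_rpow_ge _ (by linarith)
      have hfinal : (1/4) * |lam| ^ (t-1) ≤ r ^ (t-1) := by nlinarith
      have hsmall : C⁻¹ * |lam| ^ (t-1) ≤ (1/4) * |lam| ^ (t-1) := by
        apply mul_le_mul_of_nonneg_right _ habs_t.le
        calc C⁻¹ ≤ 64⁻¹ := hCinv
          _ ≤ 1/4 := by norm_num
      linarith
    · have h1 : r ^ (t-1) ≤ |lam| ^ (t-1) :=
        Real.rpow_le_rpow_of_nonpos habs habs_r (by linarith)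
      nlinarith
  -- Case (c)
  · intro hln
    have hnu : 0 < nu := lt_of_le_of_lt (abs_nonneg lam) hln
    have hsq' : 0 < lam ^ 2 + nu ^ 2 := by positivity
    set r := Real.sqrt (lam ^ 2 + nu ^ 2) with hrdef
    have hr : 0 < r := Real.sqrt_pos.mpr hsq'
    have hr2 : r ^ 2 = lam ^ 2 + nu ^ 2 := Real.sq_sqrt hsq'.le
    have hlam2 : lam ^ 2 ≤ nu ^ 2 := by nlinarith [sq_abs lam, abs_nonneg lam]
    have hd_low : ∀ x ∈ Ioo (0:ℝ) ϑ, (x ^ 2 + r ^ 2)/4 ≤ (x - lam) ^ 2 + nu ^ 2 := by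
      intro x _
      nlinarith [hr2, sq_nonneg (3*x - 4*lam)]
    have hd_high : ∀ x ∈ Ioo (0:ℝ) ϑ, (x - lam) ^ 2 + nu ^ 2 ≤ 2*(x ^ 2 + r ^ 2) := by
      intro x _
      nlinarith [hr2, sq_nonneg (x + lam)]
    obtain ⟨hlo, hhi⟩ := case_bc ht₁ ht₂ hr hωr hd_low hd_high
    have hnu_r : nu ≤ r := by
      calc nu = Real.sqrt (nu ^ 2) := (Real.sqrt_sq hnu.le).symm
        _ ≤ r := Real.sqrt_le_sqrt (by nlinarith [sq_nonneg lam])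
    have hr_2nu : r ≤ 2*nu := by
      calc r ≤ Real.sqrt ((2*nu) ^ 2) := Real.sqrt_le_sqrt (by nlinarith)
        _ = 2*nu := Real.sqrt_sq (by positivity)
    have hrt : 0 < r ^ (t-1) := Real.rpow_pos_of_pos hr _
    have hnut : 0 < nu ^ (t-1) := Real.rpow_pos_of_pos hnu _
    have h1 : r ^ (t-1) ≤ nu ^ (t-1) :=
      Real.rpow_le_rpow_of_nonpos hnu hnu_r (by linarith)
    have h2 : ((2:ℝ)*nu) ^ (t-1) ≤ r ^ (t-1) :=
      Real.rpow_le_rpow_of_nonpos hr hr_2nu (by linarith)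
    have h3 : ((2:ℝ)*nu) ^ (t-1) = 2 ^ (t-1) * nu ^ (t-1) :=
      Real.mul_rpow (by norm_num) hnu.le
    have h4 : (1/4 : ℝ) ≤ 2 ^ (t-1) := two_rpow_ge _ (by linarith)
    have hfinal : (1/4) * nu ^ (t-1) ≤ r ^ (t-1) := by nlinarith
    constructor
    · have hsmall : C⁻¹ * nu ^ (t-1) ≤ (1/64) * nu ^ (t-1) := by
        apply mul_le_mul_of_nonneg_right _ hnut.le
        calc C⁻¹ ≤ 64⁻¹ := hCinv
          _ ≤ 1/64 := by norm_num
      linarith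
    · have s1 : 4*((t+1)⁻¹ + (1-t)⁻¹) * r ^ (t-1) ≤ 4*((t+1)⁻¹ + (1-t)⁻¹) * nu ^ (t-1) :=
        mul_le_mul_of_nonneg_left h1 (by positivity)
      have s2 : 4*((t+1)⁻¹ + (1-t)⁻¹) * nu ^ (t-1) ≤ C * nu ^ (t-1) :=
        mul_le_mul_of_nonneg_right (by rw [hC]; linarith) hnut.le
      linarith



end RMT
end
end

section
/- Stability of the subordination system for large imaginary part: Let μ₁, μ₂ be Borel probability measures on ℝ that are not single point masses, define Φ₁(ω₁,ω₂,z) = F_{μ₁}(ω₂) − ω₁ − ω₂ + z and Φ₂(ω₁,ω₂,z) = F_{μ₂}(ω₁) − ω₁ − ω₂ + z, and let ω₁, ω₂ be the subordination functions of (μ₁, μ₂). Let η̃₀ > 0 and let ω̃₁, ω̃₂, r̃₁, r̃₂ be analytic functions on ℂ_{η̃₀} = {z ∈ ℂ : Im z ≥ η̃₀} such that, for some constant C > 0 and all z ∈ ℂ_{η̃₀}: |Im ω̃₁(z) − Im z| ≤ C, |Im ω̃₂(z) − Im z| ≤ C, |r̃₁(z)| ≤ C, |r̃₂(z)| ≤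 C, and Φ₁(ω̃₁(z), ω̃₂(z), z) = r̃₁(z), Φ₂(ω̃₁(z), ω̃₂(z), z) = r̃₂(z). Then there is a constant η₀ ≥ η̃₀ such that |ω̃₁(z) − ω₁(z)| ≤ 2‖(r̃₁(z), r̃₂(z))‖ and |ω̃₂(z) − ω₂(z)| ≤ 2‖(r̃₁(z), r̃₂(z))‖ for all z with Im z ≥ η₀, where ‖·‖ is the Euclidean norm on ℂ². -/
open MeasureTheory Complex Filter Matrix Set Topology

noncomputable section

namespace RMT

/-- The open upper half-plane. -/
def UHP : Set ℂ := {z : ℂ | 0 < z.im}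

/-- Stieltjes transform of a measure on `ℝ`. -/
def stT (μ : Measure ℝ) (z : ℂ) : ℂ := ∫ x, ((x : ℂ) - z)⁻¹ ∂μ

/-- Negative reciprocal Stieltjes transform. -/
def Fm (μ : Measure ℝ) (z : ℂ) : ℂ := -(stT μ z)⁻¹

/-- `ω₁, ω₂` are the subordination functions of the pair `(μ₁, μ₂)`. -/
structure IsSubordination (μ₁ μ₂ : Measure ℝ) (ω₁ ω₂ : ℂ → ℂ) : Prop where
  diff₁ : DifferentiableOn ℂ ω₁ UHP
  diff₂ : DifferentiableOn ℂ ω₂ UHP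
  imge₁ : ∀ z ∈ UHP, z.im ≤ (ω₁ z).im
  imge₂ : ∀ z ∈ UHP, z.im ≤ (ω₂ z).im
  lim₁ : Tendsto (fun η : ℝ => ω₁ ((η : ℂ) * Complex.I) / ((η : ℂ) * Complex.I)) atTop (nhds 1)
  lim₂ : Tendsto (fun η : ℝ => ω₂ ((η : ℂ) * Complex.I) / ((η : ℂ) * Complex.I)) atTop (nhds 1)
  subeq : ∀ z ∈ UHP, Fm μ₁ (ω₂ z) = Fm μ₂ (ω₁ z)
  sumeq : ∀ z ∈ UHP, Fm μ₁ (ω₂ z) = ω₁ z + ω₂ z - z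

/-- `ν` is the free additive convolution `μ₁ ⊞ μ₂`, witnessed by the subordination
functions `ω₁, ω₂`. -/
structure IsFreeConv (μ₁ μ₂ ν : Measure ℝ) (ω₁ ω₂ : ℂ → ℂ) : Prop where
  sub : IsSubordination μ₁ μ₂ ω₁ ω₂
  prob : IsProbabilityMeasure ν
  conv : ∀ z ∈ UHP, Fm ν z = Fm μ₁ (ω₂ z)

/-- Support of a Borel measure on `ℝ`. -/
def msupp (μ : Measure ℝ) : Set ℝ := {x : ℝ | ∀ ε > 0, μ (Set.Ioo (x - ε) (x + ε)) ≠ 0}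

section Aux

variable {μ : Measure ℝ}

private lemma sub_ne_zero_of_im {w : ℂ} (hw : 0 < w.im) (x : ℝ) : (x : ℂ) - w ≠ 0 := by
  intro h
  have h2 : ((x : ℂ) - w).im = 0 := by rw [h, Complex.zero_im]
  rw [Complex.sub_im, Complex.ofReal_im] at h2
  linarith

private lemma cont_res {w : ℂ} (hw : 0 < w.im) :
    Continuous fun x : ℝ => ((x : ℂ) - w)⁻¹ :=
  (Complex.continuous_ofReal.sub continuous_const).inv₀ (sub_ne_zero_of_im hw)

private lemma norm_res_le {w : ℂ} (hw : 0 < w.im) (x : ℝ) :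
    ‖((x : ℂ) - w)⁻¹‖ ≤ (w.im)⁻¹ := by
  rw [norm_inv]
  have h1 : w.im ≤ ‖(x : ℂ) - w‖ := by
    have h := Complex.abs_im_le_norm ((x : ℂ) - w)
    rw [Complex.sub_im, Complex.ofReal_im, zero_sub, abs_neg, abs_of_pos hw] at h
    exact h
  exact inv_anti₀ hw h1

private lemma integrable_of_bounded [IsFiniteMeasure μ] {E : Type*} [NormedAddCommGroup E]
    {f : ℝ → E} (hf : Continuous f) (c : ℝ) (hb : ∀ x, ‖f x‖ ≤ c) : Integrable f μ :=
  (integrable_const c).mono' hf.aestronglyMeasurable (ae_of_all _ hb)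

private lemma integrable_res [IsFiniteMeasure μ] {w : ℂ} (hw : 0 < w.im) :
    Integrable (fun x : ℝ => ((x : ℂ) - w)⁻¹) μ :=
  integrable_of_bounded (cont_res hw) (w.im)⁻¹ (norm_res_le hw)

private lemma integrable_normSq_res [IsFiniteMeasure μ] {w : ℂ} (hw : 0 < w.im) :
    Integrable (fun x : ℝ => Complex.normSq (((x : ℂ) - w)⁻¹)) μ := by
  refine integrable_of_bounded ((Complex.continuous_normSq).comp (cont_res hw)) ((w.im)⁻¹ ^ 2) ?_
  intro x
  have h : ‖((x : ℂ) - w)⁻¹‖ ≤ (w.im)⁻¹ := by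
    exact norm_res_le hw x
  rw [Real.norm_eq_abs, _root_.abs_of_nonneg (Complex.normSq_nonneg _), ← Complex.sq_norm]
  exact pow_le_pow_left₀ (norm_nonneg _) h 2

/-- imaginary part of the Stieltjes transform -/
private lemma im_stT [IsProbabilityMeasure μ] {w : ℂ} (hw : 0 < w.im) :
    (stT μ w).im = w.im * ∫ x, Complex.normSq (((x : ℂ) - w)⁻¹) ∂μ := by
  have him := integral_im (𝕜 := ℂ) (integrable_res (μ := μ) hw)
  simp only [RCLike.im_to_complex] at him
  rw [stT, ← him, ← MeasureTheory.integral_const_mul]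
  apply integral_congr_ae
  apply ae_of_all
  intro x
  have hne := sub_ne_zero_of_im hw x
  simp only [RCLike.im_to_complex]
  rw [Complex.inv_im, Complex.sub_im, Complex.ofReal_im, Complex.normSq_inv]
  rw [zero_sub, neg_neg, div_eq_mul_inv]

private lemma S_pos [IsProbabilityMeasure μ] {w : ℂ} (hw : 0 < w.im) :
    0 < ∫ x, Complex.normSq (((x : ℂ) - w)⁻¹) ∂μ := by
  rw [integral_pos_iff_support_of_nonneg (fun x => Complex.normSq_nonneg _)
    (integrable_normSq_res hw)]
  have : Function.support (fun x : ℝ => Complex.normSq (((x : ℂ) - w)⁻¹)) = Set.univ := by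
    ext x
    simp only [Function.mem_support, Set.mem_univ, iff_true]
    have := sub_ne_zero_of_im hw x
    simp [Complex.normSq_eq_zero, this]
  rw [this]
  simp

private lemma im_stT_pos [IsProbabilityMeasure μ] {w : ℂ} (hw : 0 < w.im) :
    0 < (stT μ w).im := by
  rw [im_stT hw]; exact mul_pos hw (S_pos hw)

private lemma stT_ne_zero [IsProbabilityMeasure μ] {w : ℂ} (hw : 0 < w.im) :
    stT μ w ≠ 0 := by
  intro h
  have := im_stT_pos (μ := μ) hw
  rw [h] at this
  simp at this

/-- difference identity -/
private lemma stT_diff [IsProbabilityMeasure μ] {w₁ w₂ : ℂ} (h₁ : 0 < w₁.im) (h₂ : 0 < w₂.im) :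
    stT μ w₁ - stT μ w₂
      = (w₁ - w₂) * ∫ x, (((x : ℂ) - w₁)⁻¹ * ((x : ℂ) - w₂)⁻¹) ∂μ := by
  rw [stT, stT, ← integral_sub (integrable_res h₁) (integrable_res h₂), ← integral_const_mul]
  apply integral_congr_ae
  apply ae_of_all
  intro x
  have hne₁ := sub_ne_zero_of_im h₁ x
  have hne₂ := sub_ne_zero_of_im h₂ x
  field_simp
  ring

/-- variance identity -/
private lemma variance_id [IsProbabilityMeasure μ] {w : ℂ} (hw : 0 < w.im) :
    ∫ x, Complex.normSq ((((x : ℂ) - w)⁻¹) - stT μ w) ∂μ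
      = (∫ x, Complex.normSq (((x : ℂ) - w)⁻¹) ∂μ) - Complex.normSq (stT μ w) := by
  set m := stT μ w with hm
  have h1 : ∀ x : ℝ, Complex.normSq ((((x : ℂ) - w)⁻¹) - m)
      = Complex.normSq (((x : ℂ) - w)⁻¹) - 2 * ((((x : ℂ) - w)⁻¹) * (starRingEnd ℂ) m).re
        + Complex.normSq m := by
    intro x
    rw [Complex.normSq_sub]
    ring
  rw [integral_congr_ae (ae_of_all _ h1)]
  have hint1 := integrable_normSq_res (μ := μ) hw
  have hint2 : Integrable (fun x : ℝ => ((((x : ℂ) - w)⁻¹) * (starRingEnd ℂ) m).re) μ := by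
    have : Integrable (fun x : ℝ => (((x : ℂ) - w)⁻¹) * (starRingEnd ℂ) m) μ :=
      (integrable_res hw).mul_const _
    exact this.re
  have hA : Integrable (fun x : ℝ => Complex.normSq (((x : ℂ) - w)⁻¹)
      - 2 * ((((x : ℂ) - w)⁻¹) * (starRingEnd ℂ) m).re) μ :=
    hint1.sub (hint2.const_mul 2)
  rw [integral_add hA (integrable_const _),
    integral_sub hint1 (hint2.const_mul 2), MeasureTheory.integral_const_mul, integral_const]
  have h3 : ∫ x, ((((x : ℂ) - w)⁻¹) * (starRingEnd ℂ) m).re ∂μ = Complex.normSq m := by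
    have h4 := integral_re (𝕜 := ℂ)
      ((integrable_res (μ := μ) hw).mul_const ((starRingEnd ℂ) m))
    simp only [RCLike.re_to_complex] at h4
    rw [h4, MeasureTheory.integral_mul_const]
    rw [show (∫ x, (((x:ℂ) - w)⁻¹) ∂μ) = m from rfl, Complex.mul_conj]
    simp
  rw [h3]
  simp only [probReal_univ, smul_eq_mul, one_mul]
  ring

/-- covariance identity -/
private lemma cov_id [IsProbabilityMeasure μ] {w₁ w₂ : ℂ} (h₁ : 0 < w₁.im) (h₂ : 0 < w₂.im) :
    ∫ x, (((((x : ℂ) - w₁)⁻¹) - stT μ w₁) * (((((x : ℂ) - w₂)⁻¹)) - stT μ w₂)) ∂μ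
      = (∫ x, (((x : ℂ) - w₁)⁻¹ * ((x : ℂ) - w₂)⁻¹) ∂μ) - stT μ w₁ * stT μ w₂ := by
  set m₁ := stT μ w₁
  set m₂ := stT μ w₂
  have h1 : ∀ x : ℝ, ((((x : ℂ) - w₁)⁻¹) - m₁) * ((((x : ℂ) - w₂)⁻¹) - m₂)
      = ((x : ℂ) - w₁)⁻¹ * ((x : ℂ) - w₂)⁻¹ - m₂ * ((x : ℂ) - w₁)⁻¹
        - m₁ * ((x : ℂ) - w₂)⁻¹ + m₁ * m₂ := by
    intro x; ring
  rw [integral_congr_ae (ae_of_all _ h1)]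
  have hf₁ := integrable_res (μ := μ) h₁
  have hf₂ := integrable_res (μ := μ) h₂
  have hprod : Integrable (fun x : ℝ => ((x : ℂ) - w₁)⁻¹ * ((x : ℂ) - w₂)⁻¹) μ := by
    refine integrable_of_bounded ((cont_res h₁).mul (cont_res h₂)) ((w₁.im)⁻¹ * (w₂.im)⁻¹) ?_
    intro x
    rw [norm_mul]
    exact mul_le_mul (norm_res_le h₁ x) (norm_res_le h₂ x) (norm_nonneg _)
      (le_of_lt (inv_pos.mpr h₁))
  have hA1 : Integrable (fun x : ℝ => ((x : ℂ) - w₁)⁻¹ * ((x : ℂ) - w₂)⁻¹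
      - m₂ * ((x : ℂ) - w₁)⁻¹) μ := hprod.sub (hf₁.const_mul m₂)
  have hA2 : Integrable (fun x : ℝ => ((x : ℂ) - w₁)⁻¹ * ((x : ℂ) - w₂)⁻¹
      - m₂ * ((x : ℂ) - w₁)⁻¹ - m₁ * ((x : ℂ) - w₂)⁻¹) μ := hA1.sub (hf₂.const_mul m₁)
  rw [integral_add hA2 (integrable_const _),
    integral_sub hA1 (hf₂.const_mul m₁),
    integral_sub hprod (hf₁.const_mul m₂), MeasureTheory.integral_const_mul,
    MeasureTheory.integral_const_mul, integral_const]
  simp only [probReal_univ, one_smul]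
  show (∫ x, (((x:ℂ) - w₁)⁻¹ * ((x:ℂ) - w₂)⁻¹) ∂μ) - m₂ * stT μ w₁ - m₁ * stT μ w₂ + m₁ * m₂ = _
  ring

/-- Cauchy-Schwarz -/
private lemma cauchy_schwarz [IsProbabilityMeasure μ] {g₁ g₂ : ℝ → ℂ}
    (h₁ : Continuous g₁) (h₂ : Continuous g₂) (c₁ c₂ : ℝ)
    (hb₁ : ∀ x, ‖g₁ x‖ ≤ c₁) (hb₂ : ∀ x, ‖g₂ x‖ ≤ c₂) :
    ‖∫ x, (g₁ x * g₂ x) ∂μ‖ ^ 2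
      ≤ (∫ x, Complex.normSq (g₁ x) ∂μ) * (∫ x, Complex.normSq (g₂ x) ∂μ) := by
  have hpq : Real.HolderConjugate 2 2 := Real.HolderConjugate.two_two
  have hmem₁ : MemLp (fun x => ‖g₁ x‖) (ENNReal.ofReal 2) μ :=
    MemLp.of_bound (h₁.norm.aestronglyMeasurable) c₁
      (ae_of_all _ (fun x => by rw [norm_norm]; exact hb₁ x))
  have hmem₂ : MemLp (fun x => ‖g₂ x‖) (ENNReal.ofReal 2) μ :=
    MemLp.of_bound (h₂.norm.aestronglyMeasurable) c₂
      (ae_of_all _ (fun x => by rw [norm_norm]; exact hb₂ x))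
  have hold := MeasureTheory.integral_mul_le_Lp_mul_Lq_of_nonneg hpq
    (ae_of_all _ (fun x => norm_nonneg (g₁ x))) (ae_of_all _ (fun x => norm_nonneg (g₂ x)))
    hmem₁ hmem₂
  have habs : ‖∫ x, (g₁ x * g₂ x) ∂μ‖ ≤ ∫ x, ‖g₁ x‖ * ‖g₂ x‖ ∂μ := by
    refine le_trans (norm_integral_le_integral_norm _) ?_
    apply le_of_eq
    apply integral_congr_ae (ae_of_all _ _)
    intro x; exact norm_mul _ _
  have hS₁ : ∫ x, ‖g₁ x‖ ^ (2:ℝ) ∂μ = ∫ x, Complex.normSq (g₁ x) ∂μ := by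
    apply integral_congr_ae (ae_of_all _ _)
    intro x
    rw [Real.rpow_two, ← Complex.sq_norm]
  have hS₂ : ∫ x, ‖g₂ x‖ ^ (2:ℝ) ∂μ = ∫ x, Complex.normSq (g₂ x) ∂μ := by
    apply integral_congr_ae (ae_of_all _ _)
    intro x
    rw [Real.rpow_two, ← Complex.sq_norm]
  rw [hS₁, hS₂] at hold
  have hS₁n : 0 ≤ ∫ x, Complex.normSq (g₁ x) ∂μ :=
    integral_nonneg (fun x => Complex.normSq_nonneg _)
  have hS₂n : 0 ≤ ∫ x, Complex.normSq (g₂ x) ∂μ :=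
    integral_nonneg (fun x => Complex.normSq_nonneg _)
  have key : ‖∫ x, (g₁ x * g₂ x) ∂μ‖
      ≤ Real.sqrt ((∫ x, Complex.normSq (g₁ x) ∂μ) * (∫ x, Complex.normSq (g₂ x) ∂μ)) := by
    refine le_trans habs (le_trans hold ?_)
    rw [Real.sqrt_eq_rpow, Real.mul_rpow hS₁n hS₂n]
  calc ‖∫ x, (g₁ x * g₂ x) ∂μ‖ ^ 2
      ≤ Real.sqrt ((∫ x, Complex.normSq (g₁ x) ∂μ) * (∫ x, Complex.normSq (g₂ x) ∂μ)) ^ 2 :=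
        pow_le_pow_left₀ (norm_nonneg _) key 2
    _ = _ := Real.sq_sqrt (mul_nonneg hS₁n hS₂n)

private lemma im_Fm_eq [IsProbabilityMeasure μ] {w : ℂ} (hw : 0 < w.im) :
    (Fm μ w).im = (stT μ w).im / Complex.normSq (stT μ w) := by
  rw [Fm, Complex.neg_im, Complex.inv_im, neg_div, neg_neg]

private lemma normSq_stT_le [IsProbabilityMeasure μ] {w : ℂ} (hw : 0 < w.im) :
    Complex.normSq (stT μ w) ≤ ∫ x, Complex.normSq (((x : ℂ) - w)⁻¹) ∂μ := by
  have h0 : 0 ≤ ∫ x, Complex.normSq ((((x : ℂ) - w)⁻¹) - stT μ w) ∂μ :=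
    integral_nonneg (fun x => Complex.normSq_nonneg _)
  rw [variance_id hw] at h0
  linarith

private lemma le_im_Fm [IsProbabilityMeasure μ] {w : ℂ} (hw : 0 < w.im) :
    w.im ≤ (Fm μ w).im := by
  have hn : 0 < Complex.normSq (stT μ w) :=
    Complex.normSq_pos.mpr (stT_ne_zero hw)
  rw [im_Fm_eq hw, im_stT hw, le_div_iff₀ hn]
  have := normSq_stT_le (μ := μ) hw
  nlinarith

/-- the master lemma -/
private lemma key_lemma (μ : Measure ℝ) [IsProbabilityMeasure μ] {w₁ w₂ : ℂ}
    (h₁ : 0 < w₁.im) (h₂ : 0 < w₂.im) :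
    ∃ K : ℂ, Fm μ w₁ - Fm μ w₂ = K * (w₁ - w₂) ∧
      ‖K - 1‖ ^ 2
        ≤ ((Fm μ w₁).im / w₁.im - 1) * ((Fm μ w₂).im / w₂.im - 1) := by
  have hm₁ : stT μ w₁ ≠ 0 := stT_ne_zero h₁
  have hm₂ : stT μ w₂ ≠ 0 := stT_ne_zero h₂
  set m₁ := stT μ w₁ with hm₁def
  set m₂ := stT μ w₂ with hm₂def
  set J := ∫ x, (((x : ℂ) - w₁)⁻¹ * ((x : ℂ) - w₂)⁻¹) ∂μ with hJdef
  refine ⟨J * (m₁ * m₂)⁻¹, ?_, ?_⟩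
  · have hd : m₁ - m₂ = (w₁ - w₂) * J := stT_diff h₁ h₂
    rw [Fm, Fm, ← hm₁def, ← hm₂def]
    field_simp
    linear_combination hd
  · have hn₁ : 0 < Complex.normSq m₁ := Complex.normSq_pos.mpr hm₁
    have hn₂ : 0 < Complex.normSq m₂ := Complex.normSq_pos.mpr hm₂
    have hcs := cauchy_schwarz (μ := μ)
      (g₁ := fun x : ℝ => (((x : ℂ) - w₁)⁻¹) - m₁) (g₂ := fun x : ℝ => (((x : ℂ) - w₂)⁻¹) - m₂)
      ((cont_res h₁).sub continuous_const) ((cont_res h₂).sub continuous_const)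
      ((w₁.im)⁻¹ + ‖m₁‖) ((w₂.im)⁻¹ + ‖m₂‖)
      (fun x => le_trans (norm_sub_le _ _)
        (add_le_add (norm_res_le h₁ x) (le_refl _)))
      (fun x => le_trans (norm_sub_le _ _)
        (add_le_add (norm_res_le h₂ x) (le_refl _)))
    rw [cov_id h₁ h₂, variance_id h₁, variance_id h₂] at hcs
    set S₁ := ∫ x, Complex.normSq (((x : ℂ) - w₁)⁻¹) ∂μ with hS₁def
    set S₂ := ∫ x, Complex.normSq (((x : ℂ) - w₂)⁻¹) ∂μ with hS₂def
    have hF₁ : (Fm μ w₁).im / w₁.im - 1 = (S₁ - Complex.normSq m₁) / Complex.normSq m₁ := by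
      rw [im_Fm_eq h₁, im_stT h₁, ← hm₁def, ← hS₁def]
      field_simp
    have hF₂ : (Fm μ w₂).im / w₂.im - 1 = (S₂ - Complex.normSq m₂) / Complex.normSq m₂ := by
      rw [im_Fm_eq h₂, im_stT h₂, ← hm₂def, ← hS₂def]
      field_simp
    rw [hF₁, hF₂]
    have hKm1 : J * (m₁ * m₂)⁻¹ - 1 = (J - m₁ * m₂) * (m₁ * m₂)⁻¹ := by
      field_simp
    have hcs2 : Complex.normSq (J - m₁ * m₂)
        ≤ (S₁ - Complex.normSq m₁) * (S₂ - Complex.normSq m₂) := by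
      rw [← Complex.sq_norm]; exact hcs
    rw [hKm1, norm_mul, norm_inv, norm_mul,
      mul_pow, inv_pow, mul_pow, Complex.sq_norm, Complex.sq_norm, Complex.sq_norm,
      div_mul_div_comm, ← div_eq_mul_inv,
      div_le_div_iff₀ (mul_pos hn₁ hn₂) (mul_pos hn₁ hn₂)]
    nlinarith [hcs2, mul_pos hn₁ hn₂]

end Aux

private lemma sq_le_of_le_sq {x y : ℝ} (hx : 0 ≤ x) (hy : 0 ≤ y) (h : x^2 ≤ y^2) : x ≤ y := by
  nlinarith [h, hx, hy]

set_option maxHeartbeats 1000000 in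
private lemma vt_bound {r o1 o2 zim C F : ℝ} (hC : 0 < C) (hCz : C < zim)
    (hr : r ≤ C) (ho1 : o1 - zim ≤ C) (ho2 : zim - C ≤ o2) (ho2' : 0 < o2)
    (hF : F = r + o1 + o2 - zim) :
    F / o2 - 1 ≤ 2*C/(zim - C) := by
  rw [div_sub_one ho2'.ne', div_le_div_iff₀ ho2' (by linarith)]
  have h1 : F - o2 ≤ 2*C := by linarith
  have h2 : (F - o2)*(zim - C) ≤ (2*C)*(zim - C) := mul_le_mul_of_nonneg_right h1 (by linarith)
  have h3 : (2*C)*(zim - C) ≤ (2*C)*o2 := mul_le_mul_of_nonneg_left (by linarith) (by linarith)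
  linarith

set_option maxHeartbeats 1000000 in
private lemma arith_main {C η P Q a b A B R₁ R₂ : ℝ} (hC : 0 < C) (hη : 40*(C+1)^2 ≤ η)
    (hP : 0 ≤ P) (hQ : 0 ≤ Q) (ha0 : 0 ≤ a) (hb0 : 0 ≤ b) (hA0 : 0 ≤ A) (hB0 : 0 ≤ B)
    (hR₁0 : 0 ≤ R₁) (hR₂0 : 0 ≤ R₂) (hR₁C : R₁ ≤ C) (hR₂C : R₂ ≤ C)
    (ha : a^2 * ((η - C)*(Q + η)) ≤ 2*C*P)
    (hb : b^2 * ((η - C)*(P + η)) ≤ 2*C*Q)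
    (hPA : P ≤ A + C) (hQB : Q ≤ B + C)
    (hE1 : A ≤ a*B + R₁) (hE2 : B ≤ b*A + R₂) :
    A ≤ (16/15)*R₁ + (4/15)*R₂ ∧ B ≤ (16/15)*R₂ + (4/15)*R₁ := by
  have hC1 : (0:ℝ) < C + 1 := by linarith
  have hCsq : C ≤ (C+1)^2 := by nlinarith
  have hη0 : (0:ℝ) < η := by nlinarith [sq_nonneg (C+1)]
  have hηC : 39*(C+1)^2 ≤ η - C := by nlinarith
  have hηCpos : (0:ℝ) < η - C := by nlinarith [sq_nonneg (C+1)]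
  have hQη : (0:ℝ) < Q + η := by linarith
  have hPη : (0:ℝ) < P + η := by linarith
  -- product bound on a*b
  have hmul := mul_le_mul ha hb (by positivity) (by positivity)
  have hexp : (2*C*P)*(2*C*Q) ≤ (2*C)^2 * ((Q+η)*(P+η)) := by
    nlinarith [mul_nonneg (mul_nonneg (sq_nonneg C) hQ) hη0.le,
      mul_nonneg (mul_nonneg (sq_nonneg C) hP) hη0.le,
      mul_nonneg (sq_nonneg C) (mul_pos hη0 hη0).le]
  have l0 : (a*b*(η-C))^2 * ((Q+η)*(P+η)) ≤ (2*C)^2 * ((Q+η)*(P+η)) :=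
    calc (a*b*(η-C))^2 * ((Q+η)*(P+η))
        = (a^2*((η-C)*(Q+η))) * (b^2*((η-C)*(P+η))) := by ring
      _ ≤ (2*C*P)*(2*C*Q) := hmul
      _ ≤ (2*C)^2 * ((Q+η)*(P+η)) := hexp
  have l1 : (a*b*(η-C))^2 ≤ (2*C)^2 := le_of_mul_le_mul_right l0 (by positivity)
  have habC : a*b*(η-C) ≤ 2*C :=
    sq_le_of_le_sq (by positivity) (by linarith) l1
  have hab39 : a*b ≤ 2/39 := by
    have h1 : a*b*(39*(C+1)^2) ≤ a*b*(η-C) :=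
      mul_le_mul_of_nonneg_left hηC (mul_nonneg ha0 hb0)
    have h2 : a*b*(39*(C+1)^2) ≤ 2*(C+1)^2 := by linarith [h1, habC, hCsq]
    have h3 : (39*(a*b)) * ((C+1)^2) ≤ 2 * ((C+1)^2) :=
      calc (39*(a*b)) * ((C+1)^2) = a*b*(39*(C+1)^2) := by ring
        _ ≤ 2*(C+1)^2 := h2
        _ = 2 * ((C+1)^2) := by ring
    have h4 := le_of_mul_le_mul_right h3 (by positivity : (0:ℝ) < (C+1)^2)
    linarith
  -- bootstrap bounds
  have hA1 : A ≤ a*b*A + a*R₂ + R₁ := by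
    nlinarith [hE1, mul_le_mul_of_nonneg_left hE2 ha0]
  have hB1 : B ≤ a*b*B + b*R₁ + R₂ := by
    nlinarith [hE2, mul_le_mul_of_nonneg_left hE1 hb0]
  have htP : P ≤ 3*C + 2*C*a := by
    have f1 : a*b*A ≤ (2/39)*A := mul_le_mul_of_nonneg_right hab39 hA0
    have f2 : a*R₂ ≤ a*C := mul_le_mul_of_nonneg_left hR₂C ha0
    have f3 : 0 ≤ a*C := mul_nonneg ha0 hC.le
    linarith
  have htQ : Q ≤ 3*C + 2*C*b := by
    have f1 : a*b*B ≤ (2/39)*B := mul_le_mul_of_nonneg_right hab39 hB0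
    have f2 : b*R₁ ≤ b*C := mul_le_mul_of_nonneg_left hR₁C hb0
    have f3 : 0 ≤ b*C := mul_nonneg hb0 hC.le
    linarith
  -- smallness
  have m1 : 39*(C+1)^2 * (40*(C+1)^2) ≤ (η-C)*(Q+η) :=
    mul_le_mul hηC (by linarith) (by positivity) hηCpos.le
  have m2 : 39*(C+1)^2 * (40*(C+1)^2) ≤ (η-C)*(P+η) :=
    mul_le_mul hηC (by linarith) (by positivity) hηCpos.le
  have k1 : a^2 * (39*(C+1)^2 * (40*(C+1)^2)) ≤ 2*C*P :=
    le_trans (mul_le_mul_of_nonneg_left m1 (sq_nonneg a)) ha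
  have k1b : b^2 * (39*(C+1)^2 * (40*(C+1)^2)) ≤ 2*C*Q :=
    le_trans (mul_le_mul_of_nonneg_left m2 (sq_nonneg b)) hb
  have kc : 800*C^3 ≤ 1560*(C+1)^4 := by
    have e : 1560*(C+1)^4 - 800*C^3 = 1560*C^4+5440*C^3+9360*C^2+6240*C+1560 := by ring
    linarith [e, pow_nonneg hC.le 4, pow_nonneg hC.le 3, sq_nonneg C, hC.le]
  have k3 : 800*C^3*a^2 ≤ 1560*(C+1)^4*a^2 := mul_le_mul_of_nonneg_right kc (sq_nonneg a)
  have k3b : 800*C^3*b^2 ≤ 1560*(C+1)^4*b^2 := mul_le_mul_of_nonneg_right kc (sq_nonneg b)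
  have hsmallP : 100 * (2*C*a)^2 ≤ P := by
    have l2 : 2*C*(100*(2*C*a)^2) ≤ 2*C*P :=
      calc 2*C*(100*(2*C*a)^2) = 800*C^3*a^2 := by ring
        _ ≤ 1560*(C+1)^4*a^2 := k3
        _ = a^2 * (39*(C+1)^2 * (40*(C+1)^2)) := by ring
        _ ≤ 2*C*P := k1
    exact le_of_mul_le_mul_left l2 (by linarith)
  have hsmallQ : 100 * (2*C*b)^2 ≤ Q := by
    have l2 : 2*C*(100*(2*C*b)^2) ≤ 2*C*Q :=
      calc 2*C*(100*(2*C*b)^2) = 800*C^3*b^2 := by ring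
        _ ≤ 1560*(C+1)^4*b^2 := k3b
        _ = b^2 * (39*(C+1)^2 * (40*(C+1)^2)) := by ring
        _ ≤ 2*C*Q := k1b
    exact le_of_mul_le_mul_left l2 (by linarith)
  -- P, Q bounded
  have hPb : P ≤ 4*C + 1 := by
    rcases le_total (2*C*a) 1 with h | h
    · linarith [htP, hC]
    · have htt : 2*C*a ≤ (2*C*a)^2 := by nlinarith [h]
      linarith [hsmallP, htP, htt, hC]
  have hQb : Q ≤ 4*C + 1 := by
    rcases le_total (2*C*b) 1 with h | h
    · linarith [htQ, hC]
    · have htt : 2*C*b ≤ (2*C*b)^2 := by nlinarith [h]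
      linarith [hsmallQ, htQ, htt, hC]
  -- a, b small
  have r2 : 2*C*(4*C+1) ≤ 10*(C+1)^4 := by
    have e : 10*(C+1)^4 - 2*C*(4*C+1) = 10*C^4+40*C^3+52*C^2+38*C+10 := by ring
    linarith [e, pow_nonneg hC.le 4, pow_nonneg hC.le 3, sq_nonneg C, hC.le]
  have ha12 : a ≤ 1/12 := by
    have q1 : a^2 * (1560*(C+1)^4) ≤ 10*(C+1)^4 :=
      calc a^2 * (1560*(C+1)^4) = a^2 * (39*(C+1)^2 * (40*(C+1)^2)) := by ring
        _ ≤ 2*C*P := k1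
        _ ≤ 2*C*(4*C+1) := mul_le_mul_of_nonneg_left hPb (by linarith)
        _ ≤ 10*(C+1)^4 := r2
    have hD : (0:ℝ) < 10*(C+1)^4 := by positivity
    have had : 0 ≤ a^2*(C+1)^4 := by positivity
    have h3 : (144*a^2) * (10*(C+1)^4) ≤ 1 * (10*(C+1)^4) :=
      calc (144*a^2) * (10*(C+1)^4) = 1440*(a^2*(C+1)^4) := by ring
        _ ≤ 1560*(a^2*(C+1)^4) := by linarith
        _ = a^2 * (1560*(C+1)^4) := by ring
        _ ≤ 10*(C+1)^4 := q1
        _ = 1 * (10*(C+1)^4) := by ring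
    have q2 : a^2 ≤ 1/144 := by
      have h4 := le_of_mul_le_mul_right h3 hD
      linarith
    exact sq_le_of_le_sq ha0 (by norm_num) (by norm_num; linarith [q2])
  have hb12 : b ≤ 1/12 := by
    have q1 : b^2 * (1560*(C+1)^4) ≤ 10*(C+1)^4 :=
      calc b^2 * (1560*(C+1)^4) = b^2 * (39*(C+1)^2 * (40*(C+1)^2)) := by ring
        _ ≤ 2*C*Q := k1b
        _ ≤ 2*C*(4*C+1) := mul_le_mul_of_nonneg_left hQb (by linarith)
        _ ≤ 10*(C+1)^4 := r2
    have hD : (0:ℝ) < 10*(C+1)^4 := by positivity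
    have had : 0 ≤ b^2*(C+1)^4 := by positivity
    have h3 : (144*b^2) * (10*(C+1)^4) ≤ 1 * (10*(C+1)^4) :=
      calc (144*b^2) * (10*(C+1)^4) = 1440*(b^2*(C+1)^4) := by ring
        _ ≤ 1560*(b^2*(C+1)^4) := by linarith
        _ = b^2 * (1560*(C+1)^4) := by ring
        _ ≤ 10*(C+1)^4 := q1
        _ = 1 * (10*(C+1)^4) := by ring
    have q2 : b^2 ≤ 1/144 := by
      have h4 := le_of_mul_le_mul_right h3 hD
      linarith
    exact sq_le_of_le_sq hb0 (by norm_num) (by norm_num; linarith [q2])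
  have hab144 : a*b ≤ 1/144 := by
    have h5 := mul_le_mul ha12 hb12 hb0 (by norm_num : (0:ℝ) ≤ 1/12)
    linarith [h5]
  constructor
  · have f1 : a*b*A ≤ (1/144)*A := mul_le_mul_of_nonneg_right hab144 hA0
    have f2 : a*R₂ ≤ (1/12)*R₂ := mul_le_mul_of_nonneg_right ha12 hR₂0
    linarith [hA1]
  · have f1 : a*b*B ≤ (1/144)*B := mul_le_mul_of_nonneg_right hab144 hB0
    have f2 : b*R₁ ≤ (1/12)*R₁ := mul_le_mul_of_nonneg_right hb12 hR₁0
    linarith [hB1]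


set_option maxHeartbeats 4000000 in
/-- **Stability of the subordination system for large imaginary part** (Lemma A.2). -/
theorem stability_for_large_eta
    (μ₁ μ₂ : Measure ℝ) (hp₁ : IsProbabilityMeasure μ₁) (hp₂ : IsProbabilityMeasure μ₂)
    (hnd₁ : ∀ x : ℝ, μ₁ ≠ Measure.dirac x) (hnd₂ : ∀ x : ℝ, μ₂ ≠ Measure.dirac x)
    (ω₁ ω₂ : ℂ → ℂ) (hsub : IsSubordination μ₁ μ₂ ω₁ ω₂)
    (ηt : ℝ) (hηt : 0 < ηt)
    (ωt₁ ωt₂ rt₁ rt₂ : ℂ → ℂ)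
    (han₁ : DifferentiableOn ℂ ωt₁ {z : ℂ | ηt ≤ z.im})
    (han₂ : DifferentiableOn ℂ ωt₂ {z : ℂ | ηt ≤ z.im})
    (han₃ : DifferentiableOn ℂ rt₁ {z : ℂ | ηt ≤ z.im})
    (han₄ : DifferentiableOn ℂ rt₂ {z : ℂ | ηt ≤ z.im})
    (C : ℝ) (hC : 0 < C)
    (hb₁ : ∀ z : ℂ, ηt ≤ z.im → |(ωt₁ z).im - z.im| ≤ C)
    (hb₂ : ∀ z : ℂ, ηt ≤ z.im → |(ωt₂ z).im - z.im| ≤ C)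
    (hb₃ : ∀ z : ℂ, ηt ≤ z.im → ‖rt₁ z‖ ≤ C)
    (hb₄ : ∀ z : ℂ, ηt ≤ z.im → ‖rt₂ z‖ ≤ C)
    (heq₁ : ∀ z : ℂ, ηt ≤ z.im → Fm μ₁ (ωt₂ z) - ωt₁ z - ωt₂ z + z = rt₁ z)
    (heq₂ : ∀ z : ℂ, ηt ≤ z.im → Fm μ₂ (ωt₁ z) - ωt₁ z - ωt₂ z + z = rt₂ z) :
    ∃ η₀ : ℝ, ηt ≤ η₀ ∧ ∀ z : ℂ, η₀ ≤ z.im →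
      ‖ωt₁ z - ω₁ z‖ ≤
        2 * Real.sqrt (‖rt₁ z‖ ^ 2 + ‖rt₂ z‖ ^ 2) ∧
      ‖ωt₂ z - ω₂ z‖ ≤
        2 * Real.sqrt (‖rt₁ z‖ ^ 2 + ‖rt₂ z‖ ^ 2) := by
  haveI := hp₁
  haveI := hp₂
  refine ⟨ηt + 40*(C+1)^2, by nlinarith [sq_nonneg (C+1)], ?_⟩
  intro z hz
  have hsq : (0:ℝ) < (C+1)^2 := by positivity
  have hηt' : ηt ≤ z.im := by nlinarith
  have hη40 : 40*(C+1)^2 ≤ z.im := by linarith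
  have hCz : C < z.im := by nlinarith
  have hz0 : (0:ℝ) < z.im := by linarith
  have hzU : z ∈ UHP := hz0
  have hω₁im := hsub.imge₁ z hzU
  have hω₂im := hsub.imge₂ z hzU
  have hω₁0 : 0 < (ω₁ z).im := lt_of_lt_of_le hz0 hω₁im
  have hω₂0 : 0 < (ω₂ z).im := lt_of_lt_of_le hz0 hω₂im
  have hb1 := abs_le.mp (hb₁ z hηt')
  have hb2 := abs_le.mp (hb₂ z hηt')
  have hωt₁0 : 0 < (ωt₁ z).im := by linarith [hb1.1]
  have hωt₂0 : 0 < (ωt₂ z).im := by linarith [hb2.1]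
  obtain ⟨K₁, hK₁eq, hK₁le⟩ := key_lemma μ₁ hωt₂0 hω₂0
  obtain ⟨K₂, hK₂eq, hK₂le⟩ := key_lemma μ₂ hωt₁0 hω₁0
  have hsum := hsub.sumeq z hzU
  have hsub2 : Fm μ₂ (ω₁ z) = ω₁ z + ω₂ z - z := by rw [← hsub.subeq z hzU]; exact hsum
  have he₁ := heq₁ z hηt'
  have he₂ := heq₂ z hηt'
  have hd₁ : ωt₁ z - ω₁ z = (K₁ - 1)*(ωt₂ z - ω₂ z) - rt₁ z := by
    linear_combination hK₁eq - he₁ + hsum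
  have hd₂ : ωt₂ z - ω₂ z = (K₂ - 1)*(ωt₁ z - ω₁ z) - rt₂ z := by
    linear_combination hK₂eq - he₂ + hsub2
  -- real quantities
  set A := ‖ωt₁ z - ω₁ z‖ with hAdef
  set B := ‖ωt₂ z - ω₂ z‖ with hBdef
  set a := ‖K₁ - 1‖ with hadef
  set b := ‖K₂ - 1‖ with hbdef
  set R₁ := ‖rt₁ z‖ with hR₁def
  set R₂ := ‖rt₂ z‖ with hR₂def
  set P := (ω₁ z).im - z.im with hPdef
  set Q := (ω₂ z).im - z.im with hQdef
  have hP0 : 0 ≤ P := by simp [hPdef]; linarith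
  have hQ0 : 0 ≤ Q := by simp [hQdef]; linarith
  have hE1 : A ≤ a*B + R₁ := by
    rw [hAdef, hd₁]
    refine le_trans (norm_sub_le _ _) ?_
    rw [norm_mul]
  have hE2 : B ≤ b*A + R₂ := by
    rw [hBdef, hd₂]
    refine le_trans (norm_sub_le _ _) ?_
    rw [norm_mul]
  -- V at subordination points
  have hV₁ : (Fm μ₁ (ω₂ z)).im / (ω₂ z).im - 1 = P / (Q + z.im) := by
    have h8 : (Fm μ₁ (ω₂ z)).im = (ω₁ z).im + (ω₂ z).im - z.im := by
      rw [hsum]; simp [Complex.add_im, Complex.sub_im]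
    have h9 : (ω₂ z).im = Q + z.im := by rw [hQdef]; ring
    rw [h8, h9, div_sub_one (by linarith : Q + z.im ≠ 0)]
    congr 1
    rw [hPdef]; ring
  have hV₂ : (Fm μ₂ (ω₁ z)).im / (ω₁ z).im - 1 = Q / (P + z.im) := by
    have h8 : (Fm μ₂ (ω₁ z)).im = (ω₁ z).im + (ω₂ z).im - z.im := by
      rw [hsub2]; simp [Complex.add_im, Complex.sub_im]
    have h9 : (ω₁ z).im = P + z.im := by rw [hPdef]; ring
    rw [h8, h9, div_sub_one (by linarith : P + z.im ≠ 0)]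
    congr 1
    rw [hQdef]; ring
  -- V at tilde points
  have hrim₁ : (rt₁ z).im ≤ C :=
    le_trans (le_trans (le_abs_self _) (Complex.abs_im_le_norm _)) (hb₃ z hηt')
  have hrim₂ : (rt₂ z).im ≤ C :=
    le_trans (le_trans (le_abs_self _) (Complex.abs_im_le_norm _)) (hb₄ z hηt')
  have hVt₁ : (Fm μ₁ (ωt₂ z)).im / (ωt₂ z).im - 1 ≤ 2*C/(z.im - C) := by
    have h8 : (Fm μ₁ (ωt₂ z)).im = (rt₁ z).im + (ωt₁ z).im + (ωt₂ z).im - z.im := by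
      have h7 : Fm μ₁ (ωt₂ z) = rt₁ z + ωt₁ z + ωt₂ z - z := by linear_combination he₁
      rw [h7]; simp [Complex.add_im, Complex.sub_im]
    exact vt_bound hC hCz hrim₁ hb1.2 (by linarith [hb2.1]) hωt₂0 h8
  have hVt₂ : (Fm μ₂ (ωt₁ z)).im / (ωt₁ z).im - 1 ≤ 2*C/(z.im - C) := by
    have h8' : (Fm μ₂ (ωt₁ z)).im = (rt₂ z).im + (ωt₂ z).im + (ωt₁ z).im - z.im := by
      have h7 : Fm μ₂ (ωt₁ z) = rt₂ z + ωt₁ z + ωt₂ z - z := by linear_combination he₂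
      rw [h7]; simp [Complex.add_im, Complex.sub_im]; ring
    exact vt_bound hC hCz hrim₂ hb2.2 (by linarith [hb1.1]) hωt₁0 h8' 
  -- assemble quadratic bounds
  have hQz : (0:ℝ) < Q + z.im := by linarith
  have hPz : (0:ℝ) < P + z.im := by linarith
  have ha2 : a^2 * ((z.im - C)*(Q + z.im)) ≤ 2*C*P := by
    have hV₁nn : 0 ≤ P / (Q + z.im) := div_nonneg hP0 hQz.le
    have h6 : a^2 ≤ (2*C/(z.im - C)) * (P/(Q + z.im)) := by
      refine le_trans hK₁le ?_
      rw [hV₁]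
      exact mul_le_mul_of_nonneg_right hVt₁ hV₁nn
    calc a^2 * ((z.im - C)*(Q + z.im))
        ≤ ((2*C/(z.im - C)) * (P/(Q + z.im))) * ((z.im - C)*(Q + z.im)) :=
          mul_le_mul_of_nonneg_right h6 (mul_pos (by linarith : (0:ℝ) < z.im - C) hQz).le
      _ = (2*C*P)/((z.im - C)*(Q + z.im)) * ((z.im - C)*(Q + z.im)) := by
          rw [div_mul_div_comm]
      _ = 2*C*P := div_mul_cancel₀ _ (mul_pos (by linarith : (0:ℝ) < z.im - C) hQz).ne' 
  have hb2' : b^2 * ((z.im - C)*(P + z.im)) ≤ 2*C*Q := by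
    have hV₂nn : 0 ≤ Q / (P + z.im) := div_nonneg hQ0 hPz.le
    have h6 : b^2 ≤ (2*C/(z.im - C)) * (Q/(P + z.im)) := by
      refine le_trans hK₂le ?_
      rw [hV₂]
      exact mul_le_mul_of_nonneg_right hVt₂ hV₂nn
    calc b^2 * ((z.im - C)*(P + z.im))
        ≤ ((2*C/(z.im - C)) * (Q/(P + z.im))) * ((z.im - C)*(P + z.im)) :=
          mul_le_mul_of_nonneg_right h6 (mul_pos (by linarith : (0:ℝ) < z.im - C) hPz).le
      _ = (2*C*Q)/((z.im - C)*(P + z.im)) * ((z.im - C)*(P + z.im)) := by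
          rw [div_mul_div_comm]
      _ = 2*C*Q := div_mul_cancel₀ _ (mul_pos (by linarith : (0:ℝ) < z.im - C) hPz).ne' 
  -- P ≤ A + C, Q ≤ B + C
  have hPA : P ≤ A + C := by
    have h7 := Complex.abs_im_le_norm (ωt₁ z - ω₁ z)
    rw [Complex.sub_im] at h7
    have h8 : (ω₁ z).im - (ωt₁ z).im ≤ A := by
      rw [hAdef]
      calc (ω₁ z).im - (ωt₁ z).im = -((ωt₁ z).im - (ω₁ z).im) := by ring
        _ ≤ |(ωt₁ z).im - (ω₁ z).im| := neg_le_abs _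
        _ ≤ _ := h7
    rw [hPdef]; linarith [hb1.2]
  have hQB : Q ≤ B + C := by
    have h7 := Complex.abs_im_le_norm (ωt₂ z - ω₂ z)
    rw [Complex.sub_im] at h7
    have h8 : (ω₂ z).im - (ωt₂ z).im ≤ B := by
      rw [hBdef]
      calc (ω₂ z).im - (ωt₂ z).im = -((ωt₂ z).im - (ω₂ z).im) := by ring
        _ ≤ |(ωt₂ z).im - (ω₂ z).im| := neg_le_abs _
        _ ≤ _ := h7
    rw [hQdef]; linarith [hb2.2]
  obtain ⟨hA, hB⟩ := arith_main hC hη40 hP0 hQ0 (norm_nonneg _) (norm_nonneg _)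
    (norm_nonneg _) (norm_nonneg _) (norm_nonneg _) (norm_nonneg _)
    (hb₃ z hηt') (hb₄ z hηt') ha2 hb2' hPA hQB hE1 hE2
  have hsqnn : (0:ℝ) ≤ R₁^2 + R₂^2 := by positivity
  have hsq1 : R₁ ≤ Real.sqrt (R₁^2 + R₂^2) :=
    Real.le_sqrt_of_sq_le (by linarith [sq_nonneg R₂])
  have hsq2 : R₂ ≤ Real.sqrt (R₁^2 + R₂^2) :=
    Real.le_sqrt_of_sq_le (by linarith [sq_nonneg R₁])
  constructor
  · linarith [hA, hsq1, hsq2, Real.sqrt_nonneg (R₁^2 + R₂^2)]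
  · linarith [hB, hsq1, hsq2, Real.sqrt_nonneg (R₁^2 + R₂^2)]


end RMT
end
end
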